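/- arXiv:2108.07066 — 4 statements merged into one kernel-verified Lean document; each statement's English description precedes it below -/
import Mathlib

section
/- Let k, d, d' ≥ 0 be integers, and let G be a graph whose vertex set is partitioned into sets V_1, V_2, …, V_n such that for 1 ≤ i ≤ n the induced subgraph G[V_i] admits a (k,d)-colouring, and for 1 ≤ i < n every vertex of V_i has at most d' neighbours in V_{i+1} ∪ ⋯ ∪ V_n. Then G admits a (k, d+d')-colouring. -/
open SimpleGraph Set

/-- `G` contains no induced subgraph isomorphic to `H`. -/
def IsInducedFree {V : Type*} {W : Type*} (G : SimpleGraph V) (H : SimpleGraph W) : Prop :=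
  ∀ s : Set V, ¬ Nonempty ((G.induce s) ≃g H)

/-- The double star `H_s`: two adjacent internal vertices `0` and `1`; `0` is adjacent to the
`s` leaves `2,…,s+1` and `1` is adjacent to the `s` leaves `s+2,…,2s+1`. -/
def doubleStarGraph (s : ℕ) : SimpleGraph (Fin (2*s+2)) :=
  SimpleGraph.fromRel (fun a b =>
    ((a : ℕ) = 0 ∧ (b : ℕ) = 1) ∨
    ((a : ℕ) = 0 ∧ 2 ≤ (b : ℕ) ∧ (b : ℕ) ≤ s+1) ∨
    ((a : ℕ) = 1 ∧ s+2 ≤ (b : ℕ)))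

/-- A graph has degeneracy at most `d` if every nonempty subgraph has a vertex whose degree
in that subgraph is at most `d`. -/
def DegeneracyAtMost {V : Type*} (G : SimpleGraph V) (d : ℕ) : Prop :=
  ∀ H : G.Subgraph, H.verts.Nonempty → ∃ v ∈ H.verts, (H.neighborSet v).ncard ≤ d

/-- A `(k,d)`-colouring: a partition of the vertex set into `k` parts, each inducing a
subgraph of degeneracy at most `d`. -/
def KDColorable {V : Type*} (G : SimpleGraph V) (k d : ℕ) : Prop :=
  ∃ f : V → Fin k, ∀ i : Fin k, DegeneracyAtMost (G.induce {v | f v = i}) d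

/-- `G` contains the complete bipartite graph `K_{t,t}` as a (not necessarily induced)
subgraph. -/
def ContainsKtt {V : Type*} (G : SimpleGraph V) (t : ℕ) : Prop :=
  ∃ A B : Finset V, A.card = t ∧ B.card = t ∧ Disjoint A B ∧
    ∀ a ∈ A, ∀ b ∈ B, G.Adj a b

/-- A set of vertices is stable (independent) if no two of its members are adjacent. -/
def IsStableSet {V : Type*} (G : SimpleGraph V) (S : Set V) : Prop :=
  ∀ a ∈ S, ∀ b ∈ S, a ≠ b → ¬ G.Adj a b

/-- An `s`-template in `G`: a clique `L0` complete to all the `L i`, pairwise disjoint sets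
`L 1, …, L k` (here indexed by `Fin k`) whose sizes lie between `ω^{s+5}` and `14 ω^{s+6}`,
such that each vertex of `L i` has at most `ω^{s+3}` non-neighbours in each other `L j`. -/
def IsTemplate {V : Type*} (G : SimpleGraph V) (s : ℕ) (L0 : Set V) {k : ℕ}
    (L : Fin k → Set V) : Prop :=
  (∀ i : Fin k, Disjoint L0 (L i)) ∧
  (Pairwise fun i j : Fin k => Disjoint (L i) (L j)) ∧
  G.IsClique L0 ∧
  (∀ u ∈ L0, ∀ i : Fin k, ∀ v ∈ L i, G.Adj u v) ∧
  (∀ i : Fin k, G.cliqueNum ^ (s+5) ≤ (L i).ncard ∧ (L i).ncard ≤ 14 * G.cliqueNum ^ (s+6)) ∧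
  (∀ i j : Fin k, i ≠ j → ∀ v ∈ L i,
    ({u ∈ L j | ¬ G.Adj v u}).ncard ≤ G.cliqueNum ^ (s+3))

/-- The value of an `s`-template. -/
noncomputable def templateValue {V : Type*} (G : SimpleGraph V) (s : ℕ) (L0 : Set V) {k : ℕ}
    (L : Fin k → Set V) : ℕ :=
  (⋃ i, L i).ncard + 7 * G.cliqueNum ^ (s+5) * L0.ncard + k * G.cliqueNum ^ (s+5)

/-- An optimal `s`-template: one of maximum value among all `s`-templates in `G`. -/
def IsOptimalTemplate {V : Type*} (G : SimpleGraph V) (s : ℕ) (L0 : Set V) {k : ℕ}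
    (L : Fin k → Set V) : Prop :=
  IsTemplate G s L0 L ∧
  ∀ (k' : ℕ) (L0' : Set V) (L' : Fin k' → Set V), IsTemplate G s L0' L' →
    templateValue G s L0' L' ≤ templateValue G s L0 L

/-- `V(𝓛)`, the vertex set of a template. -/
def templateVerts {V : Type*} (L0 : Set V) {k : ℕ} (L : Fin k → Set V) : Set V :=
  L0 ∪ ⋃ i, L i

/-- `N(𝓛)`: the vertices outside `V(𝓛)` with a neighbour in `L 1 ∪ ⋯ ∪ L k`. -/
def templateNbhd {V : Type*} (G : SimpleGraph V) (L0 : Set V) {k : ℕ}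
    (L : Fin k → Set V) : Set V :=
  {v | v ∉ templateVerts L0 L ∧ ∃ i : Fin k, ∃ u ∈ L i, G.Adj v u}


/-- A vertex `v` is pendant with respect to the template: there are distinct `i, j`, a vertex
`u ∈ L j` and a stable set `S ⊆ L i` of `s+1` common neighbours of `u` such that `v` is not
adjacent to `u` and `v` has exactly one neighbour in `S`. -/
def TemplatePendant {V : Type*} (G : SimpleGraph V) (s : ℕ) {k : ℕ}
    (L : Fin k → Set V) (v : V) : Prop :=
  ∃ i j : Fin k, i ≠ j ∧ ∃ u ∈ L j, ∃ S : Set V, S ⊆ L i ∧ S.ncard = s + 1 ∧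
    IsStableSet G S ∧ (∀ w ∈ S, G.Adj u w) ∧ ¬ G.Adj v u ∧ ({w ∈ S | G.Adj v w}).ncard = 1

/-- A vertex `v` is dense with respect to the template: there are `j` and `u ∈ L j` such that
for all `i ≠ j`, fewer than `ω^{s+2}/14` vertices of `L i` are adjacent to `u` and not to `v`. -/
def TemplateDense {V : Type*} (G : SimpleGraph V) (s : ℕ) {k : ℕ}
    (L : Fin k → Set V) (v : V) : Prop :=
  ∃ j : Fin k, ∃ u ∈ L j, ∀ i : Fin k, i ≠ j →
    14 * ({w ∈ L i | G.Adj u w ∧ ¬ G.Adj v w}).ncard < G.cliqueNum ^ (s+2)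

/-- A vertex `v` is pure with respect to the template: it has no neighbour in at least two of
the sets `L i`, and for each `i`, either it has no neighbour in `L i` or it has at most
`ω^{s+2}/7` non-neighbours in `L i`. -/
def TemplatePure {V : Type*} (G : SimpleGraph V) (s : ℕ) {k : ℕ}
    (L : Fin k → Set V) (v : V) : Prop :=
  (∃ i₁ i₂ : Fin k, i₁ ≠ i₂ ∧ (∀ w ∈ L i₁, ¬ G.Adj v w) ∧ (∀ w ∈ L i₂, ¬ G.Adj v w)) ∧
  (∀ i : Fin k, (∀ w ∈ L i, ¬ G.Adj v w) ∨
    7 * ({w ∈ L i | ¬ G.Adj v w}).ncard ≤ G.cliqueNum ^ (s+2))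

/-- `M_I`: the pure vertices `v` (with respect to the template) whose set `I_v` of indices `i`
such that `v` has a neighbour in `L i` equals `I`. -/
def templatePart {V : Type*} (G : SimpleGraph V) (s : ℕ) (L0 : Set V) {k : ℕ}
    (L : Fin k → Set V) (I : Set (Fin k)) : Set V :=
  {v | v ∈ templateNbhd G L0 L ∧ TemplatePure G s L v ∧
    ∀ i : Fin k, (∃ u ∈ L i, G.Adj v u) ↔ i ∈ I}

/-- Two disjoint sets `A, B` are `s`-crowded if there is no stable set meeting each of them
in exactly `s` vertices. -/
def SCrowded {V : Type*} (G : SimpleGraph V) (s : ℕ) (A B : Set V) : Prop :=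
  ¬ ∃ X : Set V, IsStableSet G X ∧ (X ∩ A).ncard = s ∧ (X ∩ B).ncard = s

/-- `c` satisfies the Kővári–Sós–Turán-type bound for `H_s`: every `H_s`-free graph either
contains `K_{t,t}` as a subgraph or has degeneracy less than `t^c`. -/
def KSTBound (s c : ℕ) : Prop :=
  ∀ (W : Type) [Fintype W], ∀ G' : SimpleGraph W, IsInducedFree G' (doubleStarGraph s) →
    ∀ t : ℕ, ContainsKtt G' t ∨ ∃ D : ℕ, D < t ^ c ∧ DegeneracyAtMost G' D

/-- `Z(𝓛)`: the union of `L0` with the set of vertices of `N(𝓛)` having at most `ω^{s+2}/4`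
non-neighbours in each `L i`. -/
def templateZ {V : Type*} (G : SimpleGraph V) (s : ℕ) (L0 : Set V) {k : ℕ}
    (L : Fin k → Set V) : Set V :=
  L0 ∪ {v ∈ templateNbhd G L0 L |
    ∀ i : Fin k, 4 * ({u ∈ L i | ¬ G.Adj v u}).ncard ≤ G.cliqueNum ^ (s+2)}

/-- `Y(𝓛) = (V(𝓛) ∪ N(𝓛)) \ Z(𝓛)`. -/
def templateY {V : Type*} (G : SimpleGraph V) (s : ℕ) (L0 : Set V) {k : ℕ}
    (L : Fin k → Set V) : Set V :=
  (templateVerts L0 L ∪ templateNbhd G L0 L) \ templateZ G s L0 L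

/-- `N_A(𝓛)`: the vertices of `A \ V(𝓛)` with a neighbour in `L 1 ∪ ⋯ ∪ L k`. -/
def templateNbhdIn {V : Type*} (G : SimpleGraph V) (A : Set V) (L0 : Set V) {k : ℕ}
    (L : Fin k → Set V) : Set V :=
  {v ∈ A | v ∉ templateVerts L0 L ∧ ∃ i : Fin k, ∃ u ∈ L i, G.Adj v u}

/-- `Z_A(𝓛)`: the union of `L0` with the set of vertices of `A \ V(𝓛)` having at most
`ω^{s+2}/4` non-neighbours in each `L i`. -/
def templateZIn {V : Type*} (G : SimpleGraph V) (s : ℕ) (A : Set V) (L0 : Set V) {k : ℕ}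
    (L : Fin k → Set V) : Set V :=
  L0 ∪ {v ∈ A | v ∉ templateVerts L0 L ∧
    ∀ i : Fin k, 4 * ({u ∈ L i | ¬ G.Adj v u}).ncard ≤ G.cliqueNum ^ (s+2)}

/-- `Y_A(𝓛) = (V(𝓛) ∪ N_A(𝓛)) \ Z_A(𝓛)`. -/
def templateYIn {V : Type*} (G : SimpleGraph V) (s : ℕ) (A : Set V) (L0 : Set V) {k : ℕ}
    (L : Fin k → Set V) : Set V :=
  (templateVerts L0 L ∪ templateNbhdIn G A L0 L) \ templateZIn G s A L0 L

namespace ChainAux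

variable {V : Type*} (G : SimpleGraph V)

/-- Restrict a subgraph of `G` to a subgraph of `G.induce s`. -/
def push (s : Set V) (H : G.Subgraph) : (G.induce s).Subgraph where
  verts := {x | (x : V) ∈ H.verts}
  Adj x y := H.Adj (x : V) (y : V)
  adj_sub h := H.adj_sub h
  edge_vert h := H.edge_vert h
  symm.symm _ _ h := H.adj_symm h

/-- View a subgraph of `G.induce s` as a subgraph of `G`. -/
def pull (s : Set V) (H' : (G.induce s).Subgraph) : G.Subgraph where
  verts := Subtype.val '' H'.verts
  Adj u v := ∃ (hu : u ∈ s) (hv : v ∈ s), H'.Adj ⟨u, hu⟩ ⟨v, hv⟩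
  adj_sub := by rintro u v ⟨hu, hv, h⟩; exact H'.adj_sub h
  edge_vert := by rintro u v ⟨hu, hv, h⟩; exact ⟨⟨u, hu⟩, H'.edge_vert h, rfl⟩
  symm.symm := by rintro u v ⟨hu, hv, h⟩; exact ⟨hv, hu, H'.adj_symm h⟩

lemma push_nbd (s : Set V) (H : G.Subgraph) (x : s) (h : H.neighborSet (x : V) ⊆ s) :
    ((push G s H).neighborSet x).ncard = (H.neighborSet (x : V)).ncard := by
  have key : Subtype.val '' ((push G s H).neighborSet x) = H.neighborSet (x : V) := by
    ext u
    constructor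
    · rintro ⟨y, hy, rfl⟩; exact hy
    · intro hu; exact ⟨⟨u, h hu⟩, hu, rfl⟩
  rw [← key, Set.ncard_image_of_injective _ Subtype.val_injective]

lemma pull_nbd (s : Set V) (H' : (G.induce s).Subgraph) (x : s) :
    ((pull G s H').neighborSet (x : V)).ncard = (H'.neighborSet x).ncard := by
  have key : (pull G s H').neighborSet (x : V) = Subtype.val '' (H'.neighborSet x) := by
    ext u
    constructor
    · rintro ⟨hu, hv, h⟩
      have hx : (⟨(x : V), hu⟩ : s) = x := Subtype.ext rfl
      rw [hx] at h
      exact ⟨⟨u, hv⟩, h, rfl⟩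
    · rintro ⟨y, hy, rfl⟩
      refine ⟨x.2, y.2, ?_⟩
      have hx : (⟨(x : V), x.2⟩ : s) = x := Subtype.ext rfl
      have hy' : (⟨(y : V), y.2⟩ : s) = y := Subtype.ext rfl
      rw [hx, hy']
      exact hy
  rw [key, Set.ncard_image_of_injective _ Subtype.val_injective]

end ChainAux

/-- The chaining lemma: if `V(G)` is partitioned into `V_1, …, V_n` where each part is
`(k,d)`-colourable and each vertex of `V_i` has at most `d'` neighbours in the later parts,
then `G` is `(k, d+d')`-colourable. -/
theorem chaining {V : Type*} [Fintype V] (G : SimpleGraph V) (k d d' n : ℕ)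
    (W : Fin n → Set V)
    (hdisj : Pairwise fun i j : Fin n => Disjoint (W i) (W j))
    (hcover : (⋃ i, W i) = Set.univ)
    (hcol : ∀ i : Fin n, KDColorable (G.induce (W i)) k d)
    (hfew : ∀ i : Fin n, ∀ v ∈ W i,
      ({u | (∃ j : Fin n, i < j ∧ u ∈ W j) ∧ G.Adj v u}).ncard ≤ d') :
    KDColorable G k (d + d') := by
  classical
  choose F hF using hcol
  have hidx : ∀ v : V, ∃ i, v ∈ W i := fun v =>
    Set.mem_iUnion.mp (hcover ▸ Set.mem_univ v)
  choose idx hmem using hidx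
  have huniq : ∀ v i, v ∈ W i → idx v = i := by
    intro v i hv
    by_contra h
    exact Set.disjoint_left.mp (hdisj h) (hmem v) hv
  refine ⟨fun v => F (idx v) ⟨v, hmem v⟩, ?_⟩
  intro c
  set f : V → Fin k := fun v => F (idx v) ⟨v, hmem v⟩ with hfdef
  have hfval : ∀ (i : Fin n) (v : V) (hv : v ∈ W i), f v = F i ⟨v, hv⟩ := by
    intro i v hv
    have h := huniq v i hv
    subst h
    rfl
  set S : Set V := {v | f v = c} with hS
  intro H' hne'
  set H := ChainAux.pull G S H' with hH
  have hHS : H.verts ⊆ S := by rintro _ ⟨x, hx, rfl⟩; exact x.2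
  have hHne : H.verts.Nonempty := hne'.image _
  obtain ⟨v0, hv0⟩ := hHne
  set T : Finset (Fin n) := Finset.univ.filter (fun i => (H.verts ∩ W i).Nonempty) with hT
  have hTne : T.Nonempty := by
    refine ⟨idx v0, ?_⟩
    simp only [hT, Finset.mem_filter, Finset.mem_univ, true_and]
    exact ⟨v0, hv0, hmem v0⟩
  set i := T.min' hTne with hi
  have himin : ∀ j, (H.verts ∩ W j).Nonempty → i ≤ j := by
    intro j hj
    exact T.min'_le j (by simp only [hT, Finset.mem_filter, Finset.mem_univ, true_and]; exact hj)
  have hine : (H.verts ∩ W i).Nonempty := by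
    have h := T.min'_mem hTne
    simpa only [hT, Finset.mem_filter, Finset.mem_univ, true_and] using h
  set K : G.Subgraph :=
    { verts := H.verts ∩ W i
      Adj := fun u v => H.Adj u v ∧ u ∈ W i ∧ v ∈ W i
      adj_sub := fun h => H.adj_sub h.1
      edge_vert := fun h => ⟨H.edge_vert h.1, h.2.1⟩
      symm := ⟨fun u v h => ⟨H.adj_symm h.1, h.2.2, h.2.1⟩⟩ } with hKdef
  set K1 := ChainAux.push G (W i) K with hK1def
  have hK1 : K1.verts ⊆ {x : ↥(W i) | F i x = c} := by
    rintro ⟨v, hv⟩ hmemK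
    have hfv : f v = c := hHS hmemK.1
    have := hfval i v hv
    simpa [this] using hfv
  set K2 := ChainAux.push (G.induce (W i)) {x : ↥(W i) | F i x = c} K1 with hK2def
  obtain ⟨w, hw⟩ := hine
  have hwK1 : (⟨w, hw.2⟩ : ↥(W i)) ∈ K1.verts := hw
  have hK2ne : K2.verts.Nonempty := ⟨⟨⟨w, hw.2⟩, hK1 hwK1⟩, hwK1⟩
  obtain ⟨y, hy, hyd⟩ := hF i c K2 hK2ne
  set x1 : ↥(W i) := (y : ↥(W i)) with hx1
  set v : V := (x1 : V) with hv
  have hvK : v ∈ K.verts := hy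
  have hn2 : (K2.neighborSet y).ncard = (K1.neighborSet x1).ncard := by
    refine ChainAux.push_nbd _ _ _ y ?_
    intro z hz
    exact hK1 (K1.edge_vert (K1.adj_symm hz))
  have hn1 : (K1.neighborSet x1).ncard = (K.neighborSet v).ncard := by
    refine ChainAux.push_nbd _ _ _ x1 ?_
    intro z hz
    exact hz.2.2
  have hKd : (K.neighborSet v).ncard ≤ d := by
    rw [← hn1, ← hn2]; exact hyd
  have hvW : v ∈ W i := hvK.2
  have hsplit : H.neighborSet v ⊆
      K.neighborSet v ∪ {u | (∃ j : Fin n, i < j ∧ u ∈ W j) ∧ G.Adj v u} := by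
    intro u hu
    by_cases hui : u ∈ W i
    · exact Or.inl ⟨hu, hvW, hui⟩
    · refine Or.inr ⟨⟨idx u, ?_, hmem u⟩, H.adj_sub hu⟩
      rcases lt_or_eq_of_le (himin (idx u) ⟨u, H.edge_vert (H.adj_symm hu), hmem u⟩) with h | h
      · exact h
      · exact absurd (by rw [h]; exact hmem u) hui
  have hHn : (H.neighborSet v).ncard ≤ d + d' := by
    calc (H.neighborSet v).ncard
        ≤ (K.neighborSet v ∪ {u | (∃ j : Fin n, i < j ∧ u ∈ W j) ∧ G.Adj v u}).ncard :=
          Set.ncard_le_ncard hsplit (Set.toFinite _)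
      _ ≤ (K.neighborSet v).ncard
            + ({u | (∃ j : Fin n, i < j ∧ u ∈ W j) ∧ G.Adj v u}).ncard :=
          Set.ncard_union_le _ _
      _ ≤ d + d' := Nat.add_le_add hKd (hfew i v hvW)
  obtain ⟨x, hx, hxv⟩ := hvK.1
  refine ⟨x, hx, ?_⟩
  calc (H'.neighborSet x).ncard = (H.neighborSet (x : V)).ncard :=
        (ChainAux.pull_nbd G S H' x).symm
    _ = (H.neighborSet v).ncard := by rw [hxv]
    _ ≤ d + d' := hHn
end

section
/- Let s ≥ 1 be an integer, let G be a graph with clique number ω ≥ 4, and let (L_0, L_1, …, L_k) be an optimal s-template in G whose value is at least 28ω^{s+6}. Suppose A and B are disjoint subsets of L_1 with |L_1 ∖ (A ∪ B)| ≤ ω^{s+3}, such that every vertex in A has fewer than ω^s non-neighbours in B. Then either |B| < 14ω^{s+1} or A = ∅. -/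
open SimpleGraph Set

section TemplateHelpers

variable {V : Type*} [Fintype V]

lemma myncard_biUnion_le' {α : Type*} (W : Finset α) (f : α → Set V) :
    (⋃ w ∈ W, f w).ncard ≤ ∑ w ∈ W, (f w).ncard := by
  classical
  induction W using Finset.induction with
  | empty => simp
  | insert _ _ h ih =>
    rename_i a t
    rw [Finset.set_biUnion_insert, Finset.sum_insert h]
    exact le_trans (Set.ncard_union_le _ _) (Nat.add_le_add le_rfl ih)

lemma myncard_iUnion_le {n : ℕ} (f : Fin n → Set V) :
    (⋃ i, f i).ncard ≤ ∑ i, (f i).ncard := by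
  have := myncard_biUnion_le' (Finset.univ : Finset (Fin n)) f
  simpa using this

lemma mydiff_nonempty {s t : Set V} (h : (t).ncard < (s).ncard) : (s \ t).Nonempty := by
  rw [Set.nonempty_iff_ne_empty]
  intro he
  have hsub : s ⊆ t := by
    intro x hx
    by_contra hxt
    exact (Set.eq_empty_iff_forall_notMem.mp he x) ⟨hx, hxt⟩
  exact absurd (Set.ncard_le_ncard hsub (Set.toFinite _)) (by omega)

lemma myncard_le2 {s a b : Set V} (h : s ⊆ a ∪ b) : s.ncard ≤ a.ncard + b.ncard :=
  le_trans (Set.ncard_le_ncard h (Set.toFinite _)) (Set.ncard_union_le _ _)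

lemma myncard_le3 {s a b c : Set V} (h : s ⊆ a ∪ b ∪ c) :
    s.ncard ≤ a.ncard + b.ncard + c.ncard :=
  le_trans (Set.ncard_le_ncard h (Set.toFinite _))
    (le_trans (Set.ncard_union_le _ _) (Nat.add_le_add (Set.ncard_union_le _ _) le_rfl))

lemma sep_ncard_eq (X : Set V) (p : V → Prop) [DecidablePred p] :
    ({x ∈ X | p x}).ncard = ((X.toFinite.toFinset).filter p).card := by
  rw [show {x ∈ X | p x} = ↑((X.toFinite.toFinset).filter p) by
    ext x; simp [Set.Finite.mem_toFinset]]
  exact Set.ncard_coe_finset _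

lemma exists_low_nonadj (G : SimpleGraph V) {A B : Set V} (hAne : A.Nonempty)
    (hBne : B.Nonempty) {m : ℕ}
    (h : ∀ a ∈ A, ({u ∈ B | ¬ G.Adj a u}).ncard < m) :
    ∃ u ∈ B, B.ncard * ({a ∈ A | ¬ G.Adj u a}).ncard < A.ncard * m := by
  classical
  set A' := A.toFinite.toFinset with hA'
  set B' := B.toFinite.toFinset with hB'
  have hA'ne : A'.Nonempty := by rwa [hA', Set.Finite.toFinset_nonempty]
  have hB'ne : B'.Nonempty := by rwa [hB', Set.Finite.toFinset_nonempty]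
  set f : V → ℕ := fun u => (A'.filter (fun a => ¬ G.Adj u a)).card with hf
  obtain ⟨u, huB, humin⟩ := Finset.exists_min_image B' f hB'ne
  refine ⟨u, by rwa [hB', Set.Finite.mem_toFinset] at huB, ?_⟩
  have hS1 : ∑ a ∈ A', (B'.filter (fun v => ¬ G.Adj a v)).card < A'.card * m := by
    have hlt : ∀ a ∈ A', (B'.filter (fun v => ¬ G.Adj a v)).card < m := by
      intro a ha
      have := h a (by rwa [hA', Set.Finite.mem_toFinset] at ha)
      rwa [sep_ncard_eq B (fun v => ¬ G.Adj a v)] at this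
    calc ∑ a ∈ A', (B'.filter (fun v => ¬ G.Adj a v)).card
        < ∑ _a ∈ A', m := Finset.sum_lt_sum_of_nonempty hA'ne hlt
      _ = A'.card * m := by rw [Finset.sum_const, smul_eq_mul]
  have hswap : ∑ a ∈ A', (B'.filter (fun v => ¬ G.Adj a v)).card
      = ∑ v ∈ B', (A'.filter (fun a => ¬ G.Adj v a)).card := by
    simp only [Finset.card_filter]
    rw [Finset.sum_comm]
    congr 1
    ext v
    congr 1
    ext a
    congr 1
    rw [G.adj_comm]
  have hmin : B'.card * f u ≤ ∑ v ∈ B', f v := by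
    calc B'.card * f u = ∑ _v ∈ B', f u := by rw [Finset.sum_const, smul_eq_mul]
      _ ≤ ∑ v ∈ B', f v := Finset.sum_le_sum humin
  have hcard : B.ncard = B'.card := by rw [hB', Set.ncard_eq_toFinset_card]
  have hcardA : A.ncard = A'.card := by rw [hA', Set.ncard_eq_toFinset_card]
  rw [hcard, hcardA, sep_ncard_eq A (fun a => ¬ G.Adj u a)]
  calc B'.card * f u ≤ ∑ v ∈ B', f v := hmin
    _ = ∑ a ∈ A', (B'.filter (fun v => ¬ G.Adj a v)).card := hswap.symm
    _ < A'.card * m := hS1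

lemma bad_count (G : SimpleGraph V) {A B : Set V} (hAne : A.Nonempty) {m c : ℕ}
    (h : ∀ a ∈ A, ({u ∈ B | ¬ G.Adj a u}).ncard < m) :
    c * ({u ∈ B | c < ({a ∈ A | ¬ G.Adj u a}).ncard}).ncard < A.ncard * m := by
  classical
  set A' := A.toFinite.toFinset with hA'
  set B' := B.toFinite.toFinset with hB'
  have hA'ne : A'.Nonempty := by rwa [hA', Set.Finite.toFinset_nonempty]
  set f : V → ℕ := fun u => (A'.filter (fun a => ¬ G.Adj u a)).card with hf
  have hfeq : ∀ u, ({a ∈ A | ¬ G.Adj u a}).ncard = f u := by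
    intro u
    rw [sep_ncard_eq A (fun a => ¬ G.Adj u a)]
  have hbadeq : ({u ∈ B | c < ({a ∈ A | ¬ G.Adj u a}).ncard}).ncard
      = (B'.filter (fun u => c < f u)).card := by
    rw [show {u ∈ B | c < ({a ∈ A | ¬ G.Adj u a}).ncard} = {u ∈ B | c < f u} by
      ext u; rw [Set.mem_setOf_eq, Set.mem_setOf_eq, hfeq]]
    exact sep_ncard_eq B (fun u => c < f u)
  have hS1 : ∑ a ∈ A', (B'.filter (fun v => ¬ G.Adj a v)).card < A'.card * m := by
    have hlt : ∀ a ∈ A', (B'.filter (fun v => ¬ G.Adj a v)).card < m := by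
      intro a ha
      have := h a (by rwa [hA', Set.Finite.mem_toFinset] at ha)
      rwa [sep_ncard_eq B (fun v => ¬ G.Adj a v)] at this
    calc ∑ a ∈ A', (B'.filter (fun v => ¬ G.Adj a v)).card
        < ∑ _a ∈ A', m := Finset.sum_lt_sum_of_nonempty hA'ne hlt
      _ = A'.card * m := by rw [Finset.sum_const, smul_eq_mul]
  have hswap : ∑ a ∈ A', (B'.filter (fun v => ¬ G.Adj a v)).card
      = ∑ v ∈ B', f v := by
    simp only [hf, Finset.card_filter]
    rw [Finset.sum_comm]
    congr 1
    ext v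
    congr 1
    ext a
    congr 1
    rw [G.adj_comm]
  have hlow : c * (B'.filter (fun u => c < f u)).card ≤ ∑ v ∈ B', f v := by
    calc c * (B'.filter (fun u => c < f u)).card
        = ∑ _v ∈ B'.filter (fun u => c < f u), c := by rw [Finset.sum_const, smul_eq_mul, mul_comm]
      _ ≤ ∑ v ∈ B'.filter (fun u => c < f u), f v := by
          refine Finset.sum_le_sum ?_
          intro u hu
          exact le_of_lt (Finset.mem_filter.mp hu).2
      _ ≤ ∑ v ∈ B', f v := Finset.sum_le_sum_of_subset (Finset.filter_subset _ _)
  rw [hbadeq]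
  have hcardA : A.ncard = A'.card := by rw [hA', Set.ncard_eq_toFinset_card]
  rw [hcardA]
  omega

end TemplateHelpers

section TemplateMain

variable {V : Type*} [Fintype V]

lemma exists_transversal (G : SimpleGraph V) (s : ℕ) (L0 : Set V) {k : ℕ}
    (L : Fin k → Set V) (hT : IsTemplate G s L0 L) (hω : 4 ≤ G.cliqueNum) (hk : 0 < k)
    (T : Finset (Fin k)) (hcard : T.card ≤ G.cliqueNum + 1) :
    ∃ w : Fin k → V, (∀ i ∈ T, w i ∈ L i) ∧
      (∀ i ∈ T, ∀ j ∈ T, i ≠ j → G.Adj (w i) (w j)) := by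
  classical
  obtain ⟨hd0, hdp, hcl, hcomp, hsize, hcross⟩ := hT
  set ω := G.cliqueNum with hωdef
  have hv0 : (L ⟨0, hk⟩).Nonempty := by
    apply Set.nonempty_of_ncard_ne_zero
    have := (hsize ⟨0, hk⟩).1
    have hp : 0 < ω ^ (s+5) := Nat.pow_pos (by omega)
    omega
  obtain ⟨v0, _⟩ := hv0
  induction T using Finset.induction with
  | empty => exact ⟨fun _ => v0, by simp, by simp⟩
  | insert _ _ hnotmem ih =>
    rename_i a t
    have hicard := Finset.card_insert_of_notMem hnotmem
    have htc : t.card ≤ ω + 1 := by omega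
    have htω : t.card ≤ ω := by omega
    obtain ⟨w, hw1, hw2⟩ := ih htc
    -- choose x in L a adjacent to all w j, j ∈ t
    have hbad : (⋃ j ∈ t, {u ∈ L a | ¬ G.Adj (w j) u}).ncard < (L a).ncard := by
      refine lt_of_le_of_lt (myncard_biUnion_le' _ _) ?_
      have hsum : ∑ j ∈ t, ({u ∈ L a | ¬ G.Adj (w j) u}).ncard ≤ t.card * ω ^ (s+3) := by
        refine le_trans (Finset.sum_le_card_nsmul _ _ (ω ^ (s+3)) ?_) (by simp [mul_comm])
        intro j hj
        have hja : j ≠ a := fun h => hnotmem (h ▸ hj)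
        exact hcross j a hja (w j) (hw1 j hj)
      refine lt_of_le_of_lt hsum ?_
      refine lt_of_le_of_lt (Nat.mul_le_mul_right _ htω) ?_
      calc ω * ω ^ (s+3) = ω ^ (s+4) := by ring
        _ < ω ^ (s+5) := Nat.pow_lt_pow_right (by omega) (by omega)
        _ ≤ (L a).ncard := (hsize a).1
    obtain ⟨x, hxL, hxbad⟩ := mydiff_nonempty hbad
    refine ⟨Function.update w a x, ?_, ?_⟩
    · intro i hi
      rcases Finset.mem_insert.mp hi with h | h
      · subst h; simp [hxL]
      · have hia : i ≠ a := fun hh => hnotmem (hh ▸ h)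
        simp [Function.update_of_ne hia, hw1 i h]
    · intro i hi j hj hij
      have hadjx : ∀ j' ∈ t, G.Adj (w j') x := by
        intro j' hj'
        by_contra hna
        exact hxbad (Set.mem_biUnion hj' ⟨hxL, hna⟩)
      rcases Finset.mem_insert.mp hi with rfl | h <;> rcases Finset.mem_insert.mp hj with h' | h'
      · exact absurd h'.symm hij
      · have hja : j ≠ i := fun hh => hnotmem (hh ▸ h')
        simp only [Function.update_self, Function.update_of_ne hja]
        exact (hadjx j h').symm
      · subst h'
        have hia : i ≠ j := hij
        simp only [Function.update_self, Function.update_of_ne hia]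
        exact hadjx i h
      · have hia : i ≠ a := fun hh => hnotmem (hh ▸ h)
        have hja : j ≠ a := fun hh => hnotmem (hh ▸ h')
        simp only [Function.update_of_ne hia, Function.update_of_ne hja]
        exact hw2 i h j h' hij

lemma parts_le_cliqueNum (G : SimpleGraph V) (s : ℕ) (L0 : Set V) {k : ℕ}
    (L : Fin k → Set V) (hT : IsTemplate G s L0 L) (hω : 4 ≤ G.cliqueNum) (hk : 0 < k) :
    k ≤ G.cliqueNum := by
  classical
  by_contra hgt
  push_neg at hgt
  obtain ⟨T, _, hTcard⟩ := Finset.exists_subset_card_eq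
    (show G.cliqueNum + 1 ≤ (Finset.univ : Finset (Fin k)).card by simpa using hgt)
  obtain ⟨w, hw1, hw2⟩ := exists_transversal G s L0 L hT hω hk T (le_of_eq hTcard)
  have hinj : Set.InjOn w T := by
    intro i hi j hj hij
    by_contra hne
    exact (hw2 i hi j hj hne).ne hij
  have hclique : G.IsClique ((T.image w : Finset V) : Set V) := by
    intro x hx y hy hxy
    simp only [Finset.coe_image, Set.mem_image, Finset.mem_coe] at hx hy
    obtain ⟨i, hi, rfl⟩ := hx
    obtain ⟨j, hj, rfl⟩ := hy
    have hij : i ≠ j := fun hh => hxy (hh ▸ rfl)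
    exact hw2 i hi j hj hij
  have hcard : (T.image w).card = G.cliqueNum + 1 := by
    rw [Finset.card_image_of_injOn hinj, hTcard]
  have := SimpleGraph.IsClique.card_le_cliqueNum (tc := hclique)
  omega

lemma move_vertex_ineq (G : SimpleGraph V) (s : ℕ) (L0 : Set V) {k : ℕ}
    (L : Fin k → Set V) (hT : IsOptimalTemplate G s L0 L)
    {v : V} {i0 : Fin k} (hv : v ∈ L i0)
    (hsurv : ∀ i, G.cliqueNum ^ (s+5) ≤ (L i ∩ {u | G.Adj v u}).ncard) :
    7 * G.cliqueNum ^ (s+5) ≤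
      ({u ∈ L i0 | ¬ G.Adj v u}).ncard + k * G.cliqueNum ^ (s+3) := by
  classical
  obtain ⟨⟨hd0, hdp, hcl, hcomp, hsize, hcross⟩, hopt⟩ := hT
  set ω := G.cliqueNum with hωdef
  set P := ω ^ (s+5) with hPdef
  set L' : Fin k → Set V := fun i => L i ∩ {u | G.Adj v u} with hL'def
  have hsub : ∀ i, L' i ⊆ L i := fun i => Set.inter_subset_left
  have hT' : IsTemplate G s (insert v L0) L' := by
    refine ⟨?_, ?_, ?_, ?_, ?_, ?_⟩
    · intro i
      rw [Set.insert_eq, Set.disjoint_union_left]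
      constructor
      · simp only [Set.disjoint_singleton_left]
        intro hm
        exact G.irrefl (hm.2)
      · exact (hd0 i).mono_right (hsub i)
    · exact fun i j hij => (hdp hij).mono (hsub i) (hsub j)
    · refine hcl.insert ?_
      intro b hb _
      exact (hcomp b hb i0 v hv).symm
    · intro u hu i w hw
      rcases Set.mem_insert_iff.mp hu with rfl | hu'
      · exact hw.2
      · exact hcomp u hu' i w (hsub i hw)
    · intro i
      exact ⟨hsurv i, le_trans (Set.ncard_le_ncard (hsub i) (Set.toFinite _)) (hsize i).2⟩
    · intro i j hij w hw
      refine le_trans (Set.ncard_le_ncard ?_ (Set.toFinite _)) (hcross i j hij w (hsub i hw))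
      intro u hu
      exact ⟨hsub j hu.1, hu.2⟩
  have hvalineq := hopt k (insert v L0) L' hT'
  have hvL0 : v ∉ L0 := fun hm => (hd0 i0).ne_of_mem hm hv rfl
  have hins : (insert v L0).ncard = L0.ncard + 1 :=
    Set.ncard_insert_of_notMem hvL0 (Set.toFinite _)
  -- unions
  have hU : (⋃ i, L i).ncard ≤ (⋃ i, L' i).ncard + ∑ i, ({u ∈ L i | ¬ G.Adj v u}).ncard := by
    have hcover : (⋃ i, L i) ⊆ (⋃ i, L' i) ∪ (⋃ i, {u ∈ L i | ¬ G.Adj v u}) := by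
      intro x hx
      obtain ⟨i, hi⟩ := Set.mem_iUnion.mp hx
      by_cases hadj : G.Adj v x
      · exact Or.inl (Set.mem_iUnion.mpr ⟨i, hi, hadj⟩)
      · exact Or.inr (Set.mem_iUnion.mpr ⟨i, hi, hadj⟩)
    refine le_trans (Set.ncard_le_ncard hcover (Set.toFinite _)) ?_
    exact le_trans (Set.ncard_union_le _ _) (Nat.add_le_add le_rfl (myncard_iUnion_le _))
  have hsumsplit : ∑ i, ({u ∈ L i | ¬ G.Adj v u}).ncard ≤
      ({u ∈ L i0 | ¬ G.Adj v u}).ncard + k * ω ^ (s+3) := by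
    rw [← Finset.add_sum_erase Finset.univ _ (Finset.mem_univ i0)]
    refine Nat.add_le_add le_rfl ?_
    refine le_trans (Finset.sum_le_card_nsmul _ _ (ω ^ (s+3)) ?_) ?_
    · intro i hi
      have hne : i0 ≠ i := fun h => (Finset.mem_erase.mp hi).1 h.symm
      exact hcross i0 i hne v hv
    · simp only [smul_eq_mul]
      exact Nat.mul_le_mul_right _ (le_trans (Finset.card_le_card (Finset.erase_subset _ _))
        (by simp))
  unfold templateValue at hvalineq
  rw [hins] at hvalineq
  have hexp : 7 * G.cliqueNum ^ (s+5) * (L0.ncard + 1)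
      = 7 * G.cliqueNum ^ (s+5) * L0.ncard + 7 * G.cliqueNum ^ (s+5) := by ring
  rw [hexp] at hvalineq
  simp only [← hωdef] at hvalineq
  omega

lemma parts_big (G : SimpleGraph V) (s : ℕ) (L0 : Set V) {k : ℕ}
    (L : Fin k → Set V) (hT : IsOptimalTemplate G s L0 L) (hω : 4 ≤ G.cliqueNum)
    (hk : 0 < k) (i : Fin k) : 5 * G.cliqueNum ^ (s+5) ≤ (L i).ncard := by
  classical
  by_contra hsmall
  push_neg at hsmall
  obtain ⟨⟨hd0, hdp, hcl, hcomp, hsize, hcross⟩, hopt⟩ := hT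
  set ω := G.cliqueNum with hωdef
  set P := ω ^ (s+5) with hPdef
  set q := ω ^ (s+3) with hqdef
  have hωq : ω * q ≤ P := by
    rw [hqdef, hPdef]
    calc ω * ω ^ (s+3) = ω ^ (s+4) := by ring
      _ ≤ ω ^ (s+5) := Nat.pow_le_pow_right (by omega) (by omega)
  have hkω : k ≤ ω := parts_le_cliqueNum G s L0 L ⟨hd0, hdp, hcl, hcomp, hsize, hcross⟩ hω hk
  set T : Finset (Fin k) := Finset.univ.filter (fun j => (L j).ncard < 5 * P) with hTdef
  have hiT : i ∈ T := by simp [hTdef, hsmall]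
  have hTne : T.Nonempty := ⟨i, hiT⟩
  have hTcard : T.card ≤ ω := le_trans (Finset.card_le_card (Finset.filter_subset _ _)) (by simpa using hkω)
  obtain ⟨w, hw1, hw2⟩ := exists_transversal G s L0 L ⟨hd0, hdp, hcl, hcomp, hsize, hcross⟩
    hω hk T (by omega)
  set CN : Set V := {x | ∀ j ∈ T, G.Adj (w j) x} with hCNdef
  set Wset : Set V := ↑(T.image w) with hWdef
  set k' := (Tᶜ).card with hk'def
  set e := (Tᶜ).orderEmbOfFin (rfl : Tᶜ.card = k') with hedef
  have he_mem : ∀ r : Fin k', e r ∈ Tᶜ := fun r => Finset.orderEmbOfFin_mem _ rfl r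
  have he_not : ∀ r : Fin k', e r ∉ T := fun r => Finset.mem_compl.mp (he_mem r)
  set L' : Fin k' → Set V := fun r => L (e r) ∩ CN with hL'def
  have hsub : ∀ r, L' r ⊆ L (e r) := fun r => Set.inter_subset_left
  have hWL : ∀ x ∈ Wset, ∃ j ∈ T, x = w j := by
    intro x hx
    rw [hWdef] at hx
    simp only [Finset.coe_image, Set.mem_image, Finset.mem_coe] at hx
    obtain ⟨j, hj, rfl⟩ := hx
    exact ⟨j, hj, rfl⟩
  -- each kept part loses at most T.card * q
  have hkeep : ∀ r : Fin k', (L (e r)).ncard ≤ (L' r).ncard + T.card * q := by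
    intro r
    have hcover : L (e r) ⊆ L' r ∪ ⋃ j ∈ T, {u ∈ L (e r) | ¬ G.Adj (w j) u} := by
      intro x hx
      by_cases hx2 : x ∈ CN
      · exact Or.inl ⟨hx, hx2⟩
      · simp only [hCNdef, Set.mem_setOf_eq, not_forall] at hx2
        obtain ⟨j, hj, hnadj⟩ := hx2
        exact Or.inr (Set.mem_biUnion hj ⟨hx, hnadj⟩)
    refine le_trans (Set.ncard_le_ncard hcover (Set.toFinite _)) ?_
    refine le_trans (Set.ncard_union_le _ _) (Nat.add_le_add le_rfl ?_)
    refine le_trans (myncard_biUnion_le' _ _) ?_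
    refine le_trans (Finset.sum_le_card_nsmul _ _ q ?_) (by simp [smul_eq_mul])
    intro j hj
    exact hcross j (e r) (fun h => he_not r (h ▸ hj)) (w j) (hw1 j hj)
  have hT' : IsTemplate G s (L0 ∪ Wset) L' := by
    refine ⟨?_, ?_, ?_, ?_, ?_, ?_⟩
    · intro r
      rw [Set.disjoint_union_left]
      refine ⟨(hd0 (e r)).mono_right (hsub r), ?_⟩
      rw [Set.disjoint_left]
      intro x hx hx2
      obtain ⟨j, hj, rfl⟩ := hWL x hx
      exact G.irrefl (hx2.2 j hj)
    · intro r r' hne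
      have : e r ≠ e r' := fun h => hne (e.injective h)
      exact (hdp this).mono (hsub r) (hsub r')
    · intro a ha b hb hne
      rcases ha with ha | ha <;> rcases hb with hb | hb
      · exact hcl ha hb hne
      · obtain ⟨j, hj, rfl⟩ := hWL b hb
        exact hcomp a ha j (w j) (hw1 j hj)
      · obtain ⟨j, hj, rfl⟩ := hWL a ha
        exact (hcomp b hb j (w j) (hw1 j hj)).symm
      · obtain ⟨j, hj, rfl⟩ := hWL a ha
        obtain ⟨j', hj', rfl⟩ := hWL b hb
        have : j ≠ j' := fun h => hne (h ▸ rfl)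
        exact hw2 j hj j' hj' this
    · intro u hu r x hx
      rcases hu with hu | hu
      · exact hcomp u hu (e r) x (hsub r hx)
      · obtain ⟨j, hj, rfl⟩ := hWL u hu
        exact hx.2 j hj
    · intro r
      constructor
      · have h5 : 5 * P ≤ (L (e r)).ncard := by
          by_contra hlt
          push_neg at hlt
          exact he_not r (by simp only [hTdef, Finset.mem_filter, Finset.mem_univ, true_and]; exact hlt)
        have hke := hkeep r
        have h2 : T.card * q ≤ P := le_trans (Nat.mul_le_mul_right _ hTcard) hωq
        show P ≤ (L' r).ncard
        omega
      · exact le_trans (Set.ncard_le_ncard (hsub r) (Set.toFinite _)) (hsize (e r)).2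
    · intro r r' hne x hx
      refine le_trans (Set.ncard_le_ncard ?_ (Set.toFinite _))
        (hcross (e r) (e r') (fun h => hne (e.injective h)) x (hsub r hx))
      intro u hu
      exact ⟨hsub r' hu.1, hu.2⟩
  have hvalineq := hopt k' (L0 ∪ Wset) L' hT'
  -- cardinalities
  have hWinj : Set.InjOn w T := by
    intro a ha b hb hab
    by_contra hne
    have hadj := hw2 a ha b hb hne
    exact (hdp hne).ne_of_mem (hw1 a ha) (hw1 b hb) hab
  have hWcard : Wset.ncard = T.card := by
    rw [hWdef, Set.ncard_coe_finset, Finset.card_image_of_injOn (by simpa using hWinj)]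
  have hL0W : (L0 ∪ Wset).ncard = L0.ncard + T.card := by
    rw [Set.ncard_union_eq ?_ (Set.toFinite _) (Set.toFinite _), hWcard]
    rw [Set.disjoint_left]
    intro x hx hxW
    obtain ⟨j, hj, rfl⟩ := hWL x hxW
    exact (hd0 j).ne_of_mem hx (hw1 j hj) rfl
  -- union bound
  set S := ∑ j ∈ T, (L j).ncard with hSdef
  have hU : (⋃ j, L j).ncard ≤ (⋃ r, L' r).ncard + S + k * (T.card * q) := by
    have hcover : (⋃ j, L j) ⊆ (⋃ r, L' r) ∪ ((⋃ j ∈ T, L j) ∪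
        ⋃ j ∈ Tᶜ, ⋃ i' ∈ T, {u ∈ L j | ¬ G.Adj (w i') u}) := by
      intro x hx
      obtain ⟨j, hj⟩ := Set.mem_iUnion.mp hx
      by_cases hjT : j ∈ T
      · exact Or.inr (Or.inl (Set.mem_biUnion hjT hj))
      · by_cases hxCN : x ∈ CN
        · have hjc : j ∈ Tᶜ := Finset.mem_compl.mpr hjT
          have : j ∈ Set.range e := by
            rw [Finset.range_orderEmbOfFin]
            exact hjc
          obtain ⟨r, rfl⟩ := this
          exact Or.inl (Set.mem_iUnion.mpr ⟨r, hj, hxCN⟩)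
        · simp only [hCNdef, Set.mem_setOf_eq, not_forall] at hxCN
          obtain ⟨i', hi', hnadj⟩ := hxCN
          exact Or.inr (Or.inr (Set.mem_biUnion (Finset.mem_compl.mpr hjT)
            (Set.mem_biUnion hi' ⟨hj, hnadj⟩)))
    refine le_trans (Set.ncard_le_ncard hcover (Set.toFinite _)) ?_
    refine le_trans (Set.ncard_union_le _ _) ?_
    rw [add_assoc]
    refine Nat.add_le_add le_rfl ?_
    refine le_trans (Set.ncard_union_le _ _) ?_
    refine Nat.add_le_add (le_trans (myncard_biUnion_le' _ _) le_rfl) ?_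
    refine le_trans (myncard_biUnion_le' _ _) ?_
    refine le_trans (Finset.sum_le_card_nsmul _ _ (T.card * q) ?_) ?_
    · intro j hj
      refine le_trans (myncard_biUnion_le' _ _) ?_
      refine le_trans (Finset.sum_le_card_nsmul _ _ q ?_) (by simp [smul_eq_mul])
      intro i' hi'
      exact hcross i' j (fun h => (Finset.mem_compl.mp hj) (h ▸ hi')) (w i') (hw1 i' hi')
    · simp only [smul_eq_mul]
      exact Nat.mul_le_mul_right _ (le_trans (Finset.card_le_card (Finset.subset_univ _)) (by simp))
  have hSlt : S < T.card * (5 * P) := by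
    rw [hSdef]
    calc ∑ j ∈ T, (L j).ncard < ∑ j ∈ T, 5 * P := by
          refine Finset.sum_lt_sum_of_nonempty hTne ?_
          intro j hj
          rw [hTdef] at hj
          simpa using (Finset.mem_filter.mp hj).2
      _ = T.card * (5 * P) := by rw [Finset.sum_const, smul_eq_mul]
  -- final arithmetic
  have hk'T : k' + T.card = k := by
    have h1 : T.card ≤ k := le_trans (Finset.card_le_card (Finset.subset_univ _)) (by simp)
    have : k' = k - T.card := by simp [hk'def, Finset.card_compl]
    omega
  unfold templateValue at hvalineq
  rw [hL0W] at hvalineq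
  simp only [← hωdef, ← hPdef] at hvalineq
  set U := (⋃ j, L j).ncard
  set U' := (⋃ r, L' r).ncard
  set t := T.card
  have hexp : 7 * P * (L0.ncard + t) = 7 * P * L0.ncard + 7 * P * t := by ring
  rw [hexp] at hvalineq
  -- hvalineq : U' + (7P L0 + 7Pt) + k'P ≤ U + 7P L0 + kP
  have hkP : k * P = k' * P + t * P := by rw [← hk'T]; ring
  have htq : k * (t * q) ≤ t * P := by
    calc k * (t * q) = t * (k * q) := by ring
      _ ≤ t * (ω * q) := Nat.mul_le_mul_left _ (Nat.mul_le_mul_right _ hkω)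
      _ ≤ t * P := Nat.mul_le_mul_left _ hωq
  have h7 : 7 * P * t = 7 * (t * P) := by ring
  have h5' : t * (5 * P) = 5 * (t * P) := by ring
  omega

lemma split_ineq (G : SimpleGraph V) (s : ℕ) (L0 : Set V) {k : ℕ}
    (L : Fin k → Set V) (hT : IsOptimalTemplate G s L0 L)
    {A D : Set V} {i0 : Fin k} (hA : A ⊆ L i0) (hD : D ⊆ L i0) (hAD : Disjoint A D)
    (hsizeA : G.cliqueNum ^ (s+5) ≤ A.ncard) (hsizeD : G.cliqueNum ^ (s+5) ≤ D.ncard)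
    (hcAD : ∀ v ∈ A, ({u ∈ D | ¬ G.Adj v u}).ncard ≤ G.cliqueNum ^ (s+3))
    (hcDA : ∀ v ∈ D, ({u ∈ A | ¬ G.Adj v u}).ncard ≤ G.cliqueNum ^ (s+3)) :
    G.cliqueNum ^ (s+5) ≤ (L i0 \ (A ∪ D)).ncard := by
  classical
  obtain ⟨⟨hd0, hdp, hcl, hcomp, hsize, hcross⟩, hopt⟩ := hT
  set M : Fin k → Set V := Function.update L i0 A with hMdef
  have hMsub : ∀ j, M j ⊆ L j := by
    intro j
    by_cases hj : j = i0
    · subst hj; rw [hMdef, Function.update_self]; exact hA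
    · rw [hMdef, Function.update_of_ne hj]
  set L' : Fin (k+1) → Set V := Fin.snoc M D with hL'def
  have hcast : ∀ j : Fin k, L' j.castSucc = M j := by
    intro j; rw [hL'def]; exact Fin.snoc_castSucc _ _ _
  have hlast : L' (Fin.last k) = D := by rw [hL'def]; exact Fin.snoc_last _ _
  -- cross bounds for M
  have hMcross : ∀ (a b : Fin k), a ≠ b → ∀ v ∈ M a,
      ({u ∈ M b | ¬ G.Adj v u}).ncard ≤ G.cliqueNum ^ (s+3) := by
    intro a b hab v hv
    refine le_trans (Set.ncard_le_ncard ?_ (Set.toFinite _)) (hcross a b hab v (hMsub a hv))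
    intro u hu; exact ⟨hMsub b hu.1, hu.2⟩
  have hDL : ∀ v ∈ D, ∀ b : Fin k, b ≠ i0 →
      ({u ∈ M b | ¬ G.Adj v u}).ncard ≤ G.cliqueNum ^ (s+3) := by
    intro v hv b hb
    refine le_trans (Set.ncard_le_ncard ?_ (Set.toFinite _))
      (hcross i0 b (fun h => hb h.symm) v (hD hv))
    intro u hu; exact ⟨hMsub b hu.1, hu.2⟩
  have hMD : ∀ (j : Fin k), Disjoint (M j) D := by
    intro j
    by_cases hj : j = i0
    · subst hj; rw [hMdef, Function.update_self]; exact hAD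
    · rw [hMdef, Function.update_of_ne hj]
      exact (hdp hj).mono_right hD
  have hT' : IsTemplate G s L0 L' := by
    refine ⟨?_, ?_, hcl, ?_, ?_, ?_⟩
    · intro i
      refine Fin.lastCases ?_ ?_ i
      · rw [hlast]; exact (hd0 i0).mono_right hD
      · intro j; rw [hcast]; exact (hd0 j).mono_right (hMsub j)
    · intro a b hab
      rcases Fin.eq_castSucc_or_eq_last a with ⟨a', rfl⟩ | rfl <;>
        rcases Fin.eq_castSucc_or_eq_last b with ⟨b', rfl⟩ | rfl
      · rw [hcast, hcast]
        have : a' ≠ b' := fun h => hab (by rw [h])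
        exact (hdp this).mono (hMsub a') (hMsub b')
      · rw [hcast, hlast]; exact hMD a'
      · rw [hcast, hlast]; exact (hMD b').symm
      · exact absurd rfl hab
    · intro u hu i v hv
      rcases Fin.eq_castSucc_or_eq_last i with ⟨j, rfl⟩ | rfl
      · rw [hcast] at hv
        exact hcomp u hu j v (hMsub j hv)
      · rw [hlast] at hv
        exact hcomp u hu i0 v (hD hv)
    · intro i
      rcases Fin.eq_castSucc_or_eq_last i with ⟨j, rfl⟩ | rfl
      · rw [hcast]
        by_cases hj : j = i0
        · subst hj
          rw [hMdef, Function.update_self]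
          exact ⟨hsizeA, le_trans (Set.ncard_le_ncard hA (Set.toFinite _)) (hsize j).2⟩
        · rw [hMdef, Function.update_of_ne hj]
          exact hsize j
      · rw [hlast]
        exact ⟨hsizeD, le_trans (Set.ncard_le_ncard hD (Set.toFinite _)) (hsize i0).2⟩
    · intro a b hab v hv
      rcases Fin.eq_castSucc_or_eq_last a with ⟨a', rfl⟩ | rfl <;>
        rcases Fin.eq_castSucc_or_eq_last b with ⟨b', rfl⟩ | rfl
      · rw [hcast] at hv ⊢
        have : a' ≠ b' := fun h => hab (by rw [h])
        exact hMcross a' b' this v hv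
      · rw [hcast] at hv
        rw [hlast]
        by_cases ha' : a' = i0
        · subst ha'
          rw [hMdef, Function.update_self] at hv
          exact hcAD v hv
        · refine le_trans (Set.ncard_le_ncard ?_ (Set.toFinite _))
            (hcross a' i0 ha' v (hMsub a' hv))
          intro u hu; exact ⟨hD hu.1, hu.2⟩
      · rw [hlast] at hv
        rw [hcast]
        by_cases hb' : b' = i0
        · subst hb'
          rw [hMdef, Function.update_self]
          exact hcDA v hv
        · exact hDL v hv b' hb'
      · exact absurd rfl hab
  have hvalineq := hopt (k+1) L0 L' hT'
  have hU : (⋃ j, L j).ncard ≤ (⋃ r, L' r).ncard + (L i0 \ (A ∪ D)).ncard := by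
    have hcover : (⋃ j, L j) ⊆ (⋃ r, L' r) ∪ (L i0 \ (A ∪ D)) := by
      intro x hx
      obtain ⟨j, hj⟩ := Set.mem_iUnion.mp hx
      by_cases hji : j = i0
      · subst hji
        by_cases hxA : x ∈ A
        · refine Or.inl (Set.mem_iUnion.mpr ⟨j.castSucc, ?_⟩)
          rw [hcast, hMdef, Function.update_self]
          exact hxA
        · by_cases hxD : x ∈ D
          · refine Or.inl (Set.mem_iUnion.mpr ⟨Fin.last k, ?_⟩)
            rw [hlast]; exact hxD
          · exact Or.inr ⟨hj, fun hm => hm.elim hxA hxD⟩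
      · refine Or.inl (Set.mem_iUnion.mpr ⟨j.castSucc, ?_⟩)
        rw [hcast, hMdef, Function.update_of_ne hji]
        exact hj
    exact le_trans (Set.ncard_le_ncard hcover (Set.toFinite _)) (Set.ncard_union_le _ _)
  unfold templateValue at hvalineq
  have hexp : (k+1) * G.cliqueNum ^ (s+5) = k * G.cliqueNum ^ (s+5) + G.cliqueNum ^ (s+5) := by
    ring
  rw [hexp] at hvalineq
  omega

end TemplateMain

/-- If `ω ≥ 4` and `A, B` are disjoint subsets of `L 1` with `|L 1 \ (A ∪ B)| ≤ ω^{s+3}` such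
that every vertex of `A` has fewer than `ω^s` non-neighbours in `B`, then `|B| < 14 ω^{s+1}`
or `A = ∅`. -/
theorem template_linked {V : Type*} [Fintype V] (G : SimpleGraph V) (s : ℕ) (hs : 1 ≤ s)
    (hω : 4 ≤ G.cliqueNum) (L0 : Set V) (k : ℕ) (hk : 0 < k) (L : Fin k → Set V)
    (hT : IsOptimalTemplate G s L0 L)
    (hval : 28 * G.cliqueNum ^ (s+6) ≤ templateValue G s L0 L)
    (A B : Set V) (hAB : Disjoint A B) (hA : A ⊆ L ⟨0, hk⟩) (hB : B ⊆ L ⟨0, hk⟩)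
    (hrest : (L ⟨0, hk⟩ \ (A ∪ B)).ncard ≤ G.cliqueNum ^ (s+3))
    (hfew : ∀ v ∈ A, ({u ∈ B | ¬ G.Adj v u}).ncard < G.cliqueNum ^ s) :
    B.ncard < 14 * G.cliqueNum ^ (s+1) ∨ A = ∅ := by
  classical
  by_contra hcon
  push_neg at hcon
  obtain ⟨hB14, hAneq⟩ := hcon
  obtain ⟨a₀, ha₀⟩ := hAneq
  obtain ⟨hd0, hdp, hcl, hcomp, hsize, hcross⟩ := hT.1
  have hωpos : 0 < G.cliqueNum := by omega
  have hkω : k ≤ G.cliqueNum := parts_le_cliqueNum G s L0 L hT.1 hω hk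
  have hbig : ∀ i, 5 * G.cliqueNum ^ (s+5) ≤ (L i).ncard :=
    fun i => parts_big G s L0 L hT hω hk i
  have hq16 : 16 * G.cliqueNum ^ (s+3) ≤ G.cliqueNum ^ (s+5) := by
    have h1 : 16 ≤ G.cliqueNum * G.cliqueNum := by nlinarith
    calc 16 * G.cliqueNum ^ (s+3) ≤ (G.cliqueNum * G.cliqueNum) * G.cliqueNum ^ (s+3) :=
          Nat.mul_le_mul_right _ h1
      _ = G.cliqueNum ^ (s+5) := by ring
  have hsq : G.cliqueNum ^ s ≤ G.cliqueNum ^ (s+3) :=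
    Nat.pow_le_pow_right (by omega) (by omega)
  have hkq : k * G.cliqueNum ^ (s+3) ≤ G.cliqueNum ^ (s+5) := by
    calc k * G.cliqueNum ^ (s+3) ≤ G.cliqueNum * G.cliqueNum ^ (s+3) :=
          Nat.mul_le_mul_right _ hkω
      _ = G.cliqueNum ^ (s+4) := by ring
      _ ≤ G.cliqueNum ^ (s+5) := Nat.pow_le_pow_right (by omega) (by omega)
  have hL1le : (L ⟨0, hk⟩).ncard ≤ 14 * G.cliqueNum ^ (s+6) := (hsize ⟨0, hk⟩).2
  have hAle : A.ncard ≤ 14 * G.cliqueNum ^ (s+6) :=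
    le_trans (Set.ncard_le_ncard hA (Set.toFinite _)) hL1le
  have hL1cover : (L ⟨0, hk⟩).ncard ≤ A.ncard + B.ncard + (L ⟨0, hk⟩ \ (A ∪ B)).ncard := by
    refine myncard_le3 ?_
    intro x hx
    by_cases hxA : x ∈ A
    · exact Or.inl (Or.inl hxA)
    · by_cases hxB : x ∈ B
      · exact Or.inl (Or.inr hxB)
      · exact Or.inr ⟨hx, fun hm => hm.elim hxA hxB⟩
  have hB1 : B.Nonempty := by
    apply Set.nonempty_of_ncard_ne_zero
    have hp : 0 < G.cliqueNum ^ (s+1) := Nat.pow_pos hωpos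
    omega
  by_cases hcase : G.cliqueNum ^ (s+5) + 14 * G.cliqueNum ^ (s+3) ≤ B.ncard
  · -- |B| large
    by_cases hAcase : G.cliqueNum ^ (s+5) ≤ A.ncard
    · -- split L_1 into A and D
      set D : Set V := {u ∈ B | ({a ∈ A | ¬ G.Adj u a}).ncard ≤ G.cliqueNum ^ (s+3)} with hDdef
      set Bad : Set V :=
        {u ∈ B | G.cliqueNum ^ (s+3) < ({a ∈ A | ¬ G.Adj u a}).ncard} with hBaddef
      have hbadlt := bad_count G (⟨a₀, ha₀⟩ : A.Nonempty) (c := G.cliqueNum ^ (s+3)) hfew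
      have hAq : A.ncard * G.cliqueNum ^ s
          ≤ 14 * (G.cliqueNum ^ (s+3) * G.cliqueNum ^ (s+3)) := by
        calc A.ncard * G.cliqueNum ^ s ≤ (14 * G.cliqueNum ^ (s+6)) * G.cliqueNum ^ s :=
              Nat.mul_le_mul_right _ hAle
          _ = 14 * (G.cliqueNum ^ (s+3) * G.cliqueNum ^ (s+3)) := by ring
      have hbadsmall : Bad.ncard < 14 * G.cliqueNum ^ (s+3) := by
        refine Nat.lt_of_mul_lt_mul_left (a := G.cliqueNum ^ (s+3)) ?_
        calc G.cliqueNum ^ (s+3) * Bad.ncard < A.ncard * G.cliqueNum ^ s := by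
              rw [hBaddef]; exact hbadlt
          _ ≤ 14 * (G.cliqueNum ^ (s+3) * G.cliqueNum ^ (s+3)) := hAq
          _ = G.cliqueNum ^ (s+3) * (14 * G.cliqueNum ^ (s+3)) := by ring
      have hBcover : B.ncard ≤ D.ncard + Bad.ncard := by
        refine myncard_le2 ?_
        intro u hu
        rcases le_or_gt ({a ∈ A | ¬ G.Adj u a}).ncard (G.cliqueNum ^ (s+3)) with h | h
        · exact Or.inl ⟨hu, h⟩
        · exact Or.inr ⟨hu, h⟩
      have hDsize : G.cliqueNum ^ (s+5) ≤ D.ncard := by omega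
      have hDsub : D ⊆ L ⟨0, hk⟩ := fun u hu => hB hu.1
      have hADdisj : Disjoint A D := hAB.mono_right (fun u hu => hu.1)
      have hcAD : ∀ v ∈ A, ({u ∈ D | ¬ G.Adj v u}).ncard ≤ G.cliqueNum ^ (s+3) := by
        intro v hv
        refine le_trans (le_trans (Set.ncard_le_ncard ?_ (Set.toFinite _))
          (le_of_lt (hfew v hv))) hsq
        intro u hu
        exact ⟨hu.1.1, hu.2⟩
      have hcDA : ∀ v ∈ D, ({u ∈ A | ¬ G.Adj v u}).ncard ≤ G.cliqueNum ^ (s+3) :=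
        fun v hv => hv.2
      have hsplit := split_ineq G s L0 L hT hA hDsub hADdisj hAcase hDsize hcAD hcDA
      have hfinal : (L ⟨0, hk⟩ \ (A ∪ D)).ncard ≤ (L ⟨0, hk⟩ \ (A ∪ B)).ncard + Bad.ncard := by
        refine myncard_le2 ?_
        intro x hx
        by_cases hxB : x ∈ B
        · refine Or.inr ⟨hxB, ?_⟩
          by_contra hle
          push_neg at hle
          exact hx.2 (Or.inr ⟨hxB, hle⟩)
        · exact Or.inl ⟨hx.1, fun hm => hm.elim (fun h => hx.2 (Or.inl h)) hxB⟩
      omega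
    · -- A small : move a₀ into L0
      push_neg at hAcase
      have hfewB := hfew a₀ ha₀
      have hsurv : ∀ i, G.cliqueNum ^ (s+5) ≤ (L i ∩ {u | G.Adj a₀ u}).ncard := by
        intro i
        by_cases hi : i = ⟨0, hk⟩
        · subst hi
          have hcov : B.ncard ≤ (L ⟨0, hk⟩ ∩ {u | G.Adj a₀ u}).ncard
              + ({u ∈ B | ¬ G.Adj a₀ u}).ncard := by
            refine myncard_le2 ?_
            intro x hx
            by_cases hadj : G.Adj a₀ x
            · exact Or.inl ⟨hB hx, hadj⟩
            · exact Or.inr ⟨hx, hadj⟩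
          omega
        · have hcov : (L i).ncard ≤ (L i ∩ {u | G.Adj a₀ u}).ncard
              + ({u ∈ L i | ¬ G.Adj a₀ u}).ncard := by
            refine myncard_le2 ?_
            intro x hx
            by_cases hadj : G.Adj a₀ x
            · exact Or.inl ⟨hx, hadj⟩
            · exact Or.inr ⟨hx, hadj⟩
          have hcr := hcross ⟨0, hk⟩ i (fun h => hi h.symm) a₀ (hA ha₀)
          have hbigi := hbig i
          omega
      have hmv := move_vertex_ineq G s L0 L hT (hA ha₀) hsurv
      have hcov2 : ({u ∈ L ⟨0, hk⟩ | ¬ G.Adj a₀ u}).ncard ≤ A.ncard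
          + ({u ∈ B | ¬ G.Adj a₀ u}).ncard + (L ⟨0, hk⟩ \ (A ∪ B)).ncard := by
        refine myncard_le3 ?_
        intro x hx
        by_cases hxA : x ∈ A
        · exact Or.inl (Or.inl hxA)
        · by_cases hxB : x ∈ B
          · exact Or.inl (Or.inr ⟨hxB, hx.2⟩)
          · exact Or.inr ⟨hx.1, fun hm => hm.elim hxA hxB⟩
      omega
  · -- |B| small
    push_neg at hcase
    have hAbig : 3 * G.cliqueNum ^ (s+5) ≤ A.ncard := by
      have hbig0 := hbig ⟨0, hk⟩
      omega
    obtain ⟨u, huB, hulow⟩ := exists_low_nonadj G ⟨a₀, ha₀⟩ hB1 hfew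
    have hXP : ({a ∈ A | ¬ G.Adj u a}).ncard < G.cliqueNum ^ (s+5) := by
      refine Nat.lt_of_mul_lt_mul_left (a := B.ncard) ?_
      calc B.ncard * ({a ∈ A | ¬ G.Adj u a}).ncard < A.ncard * G.cliqueNum ^ s := hulow
        _ ≤ (14 * G.cliqueNum ^ (s+6)) * G.cliqueNum ^ s := Nat.mul_le_mul_right _ hAle
        _ = (14 * G.cliqueNum ^ (s+1)) * G.cliqueNum ^ (s+5) := by ring
        _ ≤ B.ncard * G.cliqueNum ^ (s+5) := Nat.mul_le_mul_right _ hB14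
    have hsurv : ∀ i, G.cliqueNum ^ (s+5) ≤ (L i ∩ {w | G.Adj u w}).ncard := by
      intro i
      by_cases hi : i = ⟨0, hk⟩
      · subst hi
        have hcov : A.ncard ≤ (L ⟨0, hk⟩ ∩ {w | G.Adj u w}).ncard
            + ({a ∈ A | ¬ G.Adj u a}).ncard := by
          refine myncard_le2 ?_
          intro x hx
          by_cases hadj : G.Adj u x
          · exact Or.inl ⟨hA hx, hadj⟩
          · exact Or.inr ⟨hx, hadj⟩
        omega
      · have hcov : (L i).ncard ≤ (L i ∩ {w | G.Adj u w}).ncard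
            + ({w ∈ L i | ¬ G.Adj u w}).ncard := by
          refine myncard_le2 ?_
          intro x hx
          by_cases hadj : G.Adj u x
          · exact Or.inl ⟨hx, hadj⟩
          · exact Or.inr ⟨hx, hadj⟩
        have hcr := hcross ⟨0, hk⟩ i (fun h => hi h.symm) u (hB huB)
        have hbigi := hbig i
        omega
    have hmv := move_vertex_ineq G s L0 L hT (hB huB) hsurv
    have hcov2 : ({w ∈ L ⟨0, hk⟩ | ¬ G.Adj u w}).ncard ≤ ({a ∈ A | ¬ G.Adj u a}).ncard
        + B.ncard + (L ⟨0, hk⟩ \ (A ∪ B)).ncard := by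
      refine myncard_le3 ?_
      intro x hx
      by_cases hxA : x ∈ A
      · exact Or.inl (Or.inl ⟨hxA, hx.2⟩)
      · by_cases hxB : x ∈ B
        · exact Or.inl (Or.inr hxB)
        · exact Or.inr ⟨hx.1, fun hm => hm.elim hxA hxB⟩
    omega
end

section
/- Let s ≥ 1 be an integer, let G be an H_s-free graph with clique number ω, and let 𝓛 = (L_0, L_1, …, L_k) be an optimal s-template in G. Then there are at most 14^{s+2}·ω^{s²+9s+14} vertices of N(𝓛) that are pendant with respect to 𝓛. -/
open SimpleGraph Set

section AuxRamsey

lemma ramsey_card_lt {V : Type*} [DecidableEq V] (G : SimpleGraph V) :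
    ∀ n s m : ℕ, s + m ≤ n → ∀ A : Finset V,
    (∀ T ⊆ A, IsStableSet G ↑T → T.card < s) →
    (∀ C ⊆ A, G.IsClique (↑C : Set V) → C.card ≤ m) →
    2 ≤ m → A.card < m ^ s := by
  classical
  intro n
  induction n with
  | zero =>
    intro s m h A hst _ hm
    have := hst ∅ (Finset.empty_subset _) (by intro a ha; simp at ha)
    simp at this; omega
  | succ n ih =>
    intro s m hsm A hst hcl hm
    match s with
    | 0 =>
      have := hst ∅ (Finset.empty_subset _) (by intro a ha; simp at ha)
      simp at this
    | 1 =>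
      rcases Finset.eq_empty_or_nonempty A with rfl | ⟨a, ha⟩
      · simpa using pow_pos (show 0 < m by omega) 1
      · have := hst {a} (by simpa using ha)
          (by intro x hx y hy hxy hadj; simp at hx hy; exact hxy (hx.trans hy.symm))
        simp at this
    | s'+2 =>
      rcases Finset.eq_empty_or_nonempty A with rfl | ⟨v, hv⟩
      · simpa using pow_pos (show 0 < m by omega) (s'+2)
      · set A₁ := (A.erase v).filter (fun x => ¬ G.Adj v x) with hA₁
        set A₂ := A.filter (fun x => G.Adj v x) with hA₂
        have hsub : A ⊆ insert v (A₁ ∪ A₂) := by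
          intro x hx
          by_cases hxv : x = v
          · simp [hxv]
          · by_cases hadj : G.Adj v x
            · simp [hA₂, Finset.mem_insert, Finset.mem_union, Finset.mem_filter, hx, hadj]
            · simp [hA₁, Finset.mem_insert, Finset.mem_union, Finset.mem_filter,
                Finset.mem_erase, hx, hadj, hxv]
        have hcard : A.card ≤ A₁.card + A₂.card + 1 := by
          have h1 := Finset.card_le_card hsub
          have h2 := Finset.card_insert_le v (A₁ ∪ A₂)
          have h3 := Finset.card_union_le A₁ A₂
          omega
        -- stable subsets of A₁ have size < s'+1
        have hst1 : ∀ T ⊆ A₁, IsStableSet G ↑T → T.card < s' + 1 := by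
          intro T hT hTst
          have hvT : v ∉ T := by
            intro hvT
            have := hT hvT
            simp [hA₁, Finset.mem_filter, Finset.mem_erase] at this
          have hins : (insert v T).card < s' + 2 := by
            refine hst _ ?_ ?_
            · intro x hx
              rcases Finset.mem_insert.1 hx with rfl | hx
              · exact hv
              · exact (Finset.erase_subset _ _) ((Finset.filter_subset _ _) (hT hx))
            · intro a ha b hb hab
              simp only [Finset.coe_insert, Set.mem_insert_iff, Finset.mem_coe] at ha hb
              rcases ha with rfl | ha
              · rcases hb with rfl | hb
                · exact absurd rfl hab
                · have := hT hb; simp [hA₁, Finset.mem_filter] at this; exact this.2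
              · rcases hb with rfl | hb
                · have := hT ha; simp [hA₁, Finset.mem_filter] at this
                  intro had; exact this.2 had.symm
                · exact hTst a ha b hb hab
          rwa [Finset.card_insert_of_notMem hvT, Nat.add_lt_add_iff_right] at hins
        have hb1 : A₁.card < m ^ (s'+1) := by
          apply ih (s'+1) m (by omega) _ hst1 _ hm
          intro C hC hCcl
          exact hcl C (hC.trans ((Finset.filter_subset _ _).trans (Finset.erase_subset _ _))) hCcl
        -- cliques in A₂ have size ≤ m - 1 (stated as: insert v C has size ≤ m)
        have hcl2 : ∀ C ⊆ A₂, G.IsClique (↑C : Set V) → C.card + 1 ≤ m := by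
          intro C hC hCcl
          have hvC : v ∉ C := by
            intro hvC
            have := hC hvC
            simp [hA₂, Finset.mem_filter] at this
          have hins : (insert v C).card ≤ m := by
            refine hcl _ ?_ ?_
            · intro x hx
              rcases Finset.mem_insert.1 hx with rfl | hx
              · exact hv
              · exact (Finset.filter_subset _ _) (hC hx)
            · rw [Finset.coe_insert]
              apply SimpleGraph.IsClique.insert hCcl
              intro b hb hbv
              have := hC hb; simp [hA₂, Finset.mem_filter] at this
              exact this.2
          rwa [Finset.card_insert_of_notMem hvC] at hins
        rcases Nat.lt_or_ge m 3 with hm2 | hm3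
        · -- m = 2 : A₂ is stable
          have hm2' : m = 2 := by omega
          subst hm2'
          have hA2st : IsStableSet G (↑A₂ : Set V) := by
            intro a ha b hb hab hadj
            have : ({a, b} : Finset V).card + 1 ≤ 2 := by
              refine hcl2 {a, b} ?_ ?_
              · intro x hx
                rcases Finset.mem_insert.1 hx with rfl | hx
                · exact ha
                · simp at hx; subst hx; exact hb
              · intro x hx y hy hxy
                simp at hx hy
                rcases hx with rfl | rfl <;> rcases hy with rfl | rfl
                · exact absurd rfl hxy
                · exact hadj
                · exact hadj.symm
                · exact absurd rfl hxy
            rw [Finset.card_insert_of_notMem (by simpa using hab), Finset.card_singleton] at this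
            omega
          have hb2 : A₂.card < s' + 2 :=
            hst A₂ (Finset.filter_subset _ _) hA2st
          have h3 : s' + 1 < 2 ^ (s'+1) := Nat.lt_two_pow_self
          have e : (2:ℕ) ^ (s'+2) = 2 ^ (s'+1) + 2 ^ (s'+1) := by ring
          omega
        · -- m ≥ 3
          obtain ⟨m', rfl⟩ : ∃ m', m = m' + 3 := ⟨m - 3, by omega⟩
          have hb2 : A₂.card < (m'+2) ^ (s'+2) := by
            apply ih (s'+2) (m'+2) (by omega) _ ?_ ?_ (by omega)
            · intro T hT hTst
              exact hst T (hT.trans (Finset.filter_subset _ _)) hTst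
            · intro C hC hCcl
              have := hcl2 C hC hCcl
              omega
          have h1 : (m'+2)^(s'+1) ≤ (m'+3)^(s'+1) := Nat.pow_le_pow_left (by omega) _
          have hRP : (m'+2)^(s'+2) + (m'+3)^(s'+1) ≤ (m'+3)^(s'+2) := by
            calc (m'+2)^(s'+2) + (m'+3)^(s'+1)
                = (m'+2)^(s'+1)*(m'+2) + (m'+3)^(s'+1) := by ring
              _ ≤ (m'+3)^(s'+1)*(m'+2) + (m'+3)^(s'+1) :=
                  Nat.add_le_add_right (Nat.mul_le_mul_right _ h1) _
              _ = (m'+3)^(s'+2) := by ring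
          omega

end AuxRamsey
section AuxDoubleStar

lemma dsAdj_iff (s : ℕ) (a b : Fin (2*s+2)) :
    (doubleStarGraph s).Adj a b ↔ (a:ℕ) ≠ (b:ℕ) ∧
      ((((a:ℕ) = 0 ∧ (b:ℕ) = 1) ∨ ((a:ℕ) = 0 ∧ 2 ≤ (b:ℕ) ∧ (b:ℕ) ≤ s+1) ∨
        ((a:ℕ) = 1 ∧ s+2 ≤ (b:ℕ))) ∨
       (((b:ℕ) = 0 ∧ (a:ℕ) = 1) ∨ ((b:ℕ) = 0 ∧ 2 ≤ (a:ℕ) ∧ (a:ℕ) ≤ s+1) ∨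
        ((b:ℕ) = 1 ∧ s+2 ≤ (a:ℕ)))) := by
  rw [doubleStarGraph, SimpleGraph.fromRel_adj]
  constructor
  · rintro ⟨hab, h⟩
    exact ⟨fun hh => hab (Fin.ext hh), h⟩
  · rintro ⟨hab, h⟩
    exact ⟨fun hh => hab (congrArg _ hh), h⟩

lemma no_double_star {V : Type*} (G : SimpleGraph V) (s : ℕ)
    (hfree : IsInducedFree G (doubleStarGraph s))
    (u w : V) (x y : Fin s → V)
    (hxinj : Function.Injective x) (hyinj : Function.Injective y)
    (hwx : ∀ r, w ≠ x r) (huy : ∀ r, u ≠ y r) (hxy : ∀ r r', x r ≠ y r')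
    (huw : G.Adj u w)
    (hux : ∀ r, G.Adj u (x r))
    (hwy : ∀ r, G.Adj w (y r))
    (hnwx : ∀ r, ¬ G.Adj w (x r))
    (hnuy : ∀ r, ¬ G.Adj u (y r))
    (hnxx : ∀ r r', r ≠ r' → ¬ G.Adj (x r) (x r'))
    (hnyy : ∀ r r', r ≠ r' → ¬ G.Adj (y r) (y r'))
    (hnxy : ∀ r r', ¬ G.Adj (x r) (y r')) : False := by
  classical
  have huw' : u ≠ w := huw.ne
  have hux' : ∀ r, u ≠ x r := fun r => (hux r).ne
  have hwy' : ∀ r, w ≠ y r := fun r => (hwy r).ne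
  set φ : Fin (2*s+2) → V := fun a =>
    if h0 : (a:ℕ) = 0 then u else if h1 : (a:ℕ) = 1 then w
    else if h2 : (a:ℕ) < s + 2 then x ⟨(a:ℕ) - 2, by omega⟩
    else y ⟨(a:ℕ) - (s+2), by have := a.isLt; omega⟩ with hφ
  have hφ0 : ∀ a : Fin (2*s+2), (a:ℕ) = 0 → φ a = u := by
    intro a h; simp only [hφ]; rw [dif_pos h]
  have hφ1 : ∀ a : Fin (2*s+2), (a:ℕ) = 1 → φ a = w := by
    intro a h; simp only [hφ]; rw [dif_neg (by omega), dif_pos h]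
  have hφx : ∀ (a : Fin (2*s+2)) (h2 : 2 ≤ (a:ℕ)) (hlt : (a:ℕ) < s+2),
      φ a = x ⟨(a:ℕ) - 2, by omega⟩ := by
    intro a h2 hlt; simp only [hφ]
    rw [dif_neg (by omega), dif_neg (by omega), dif_pos hlt]
  have hφy : ∀ (a : Fin (2*s+2)) (h2 : s+2 ≤ (a:ℕ)),
      φ a = y ⟨(a:ℕ) - (s+2), by have := a.isLt; omega⟩ := by
    intro a h2; simp only [hφ]
    rw [dif_neg (by omega), dif_neg (by omega), dif_neg (by omega)]
  -- the adjacency pattern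
  have key : ∀ a b : Fin (2*s+2), G.Adj (φ a) (φ b) ↔ (doubleStarGraph s).Adj a b := by
    intro a b
    rw [dsAdj_iff]
    have ha := a.isLt
    have hb := b.isLt
    rcases Nat.lt_or_ge (a:ℕ) 2 with ha2 | ha2
    · rcases Nat.lt_or_ge (b:ℕ) 2 with hb2 | hb2
      · -- both centers
        rcases Nat.lt_or_ge (a:ℕ) 1 with ha1 | ha1 <;> rcases Nat.lt_or_ge (b:ℕ) 1 with hb1 | hb1
        · rw [hφ0 a (by omega), hφ0 b (by omega)]; simp [G.loopless]; omega
        · rw [hφ0 a (by omega), hφ1 b (by omega)]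
          constructor
          · intro _; exact ⟨by omega, by omega⟩
          · intro _; exact huw
        · rw [hφ1 a (by omega), hφ0 b (by omega)]
          constructor
          · intro _; exact ⟨by omega, by omega⟩
          · intro _; exact huw.symm
        · rw [hφ1 a (by omega), hφ1 b (by omega)]; simp [G.loopless]; omega
      · rcases Nat.lt_or_ge (b:ℕ) (s+2) with hbx | hby
        · -- b is an x-leaf
          rw [hφx b hb2 hbx]
          rcases Nat.lt_or_ge (a:ℕ) 1 with ha1 | ha1
          · rw [hφ0 a (by omega)]
            constructor
            · intro _; exact ⟨by omega, by omega⟩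
            · intro _; exact hux _
          · rw [hφ1 a (by omega)]
            constructor
            · intro hadj; exact absurd hadj (hnwx _)
            · intro hh; omega
        · -- b is a y-leaf
          rw [hφy b hby]
          rcases Nat.lt_or_ge (a:ℕ) 1 with ha1 | ha1
          · rw [hφ0 a (by omega)]
            constructor
            · intro hadj; exact absurd hadj (hnuy _)
            · intro hh; omega
          · rw [hφ1 a (by omega)]
            constructor
            · intro _; exact ⟨by omega, by omega⟩
            · intro _; exact hwy _
    · rcases Nat.lt_or_ge (b:ℕ) 2 with hb2 | hb2
      · rcases Nat.lt_or_ge (a:ℕ) (s+2) with hax | hay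
        · rw [hφx a ha2 hax]
          rcases Nat.lt_or_ge (b:ℕ) 1 with hb1 | hb1
          · rw [hφ0 b (by omega)]
            constructor
            · intro _; exact ⟨by omega, by omega⟩
            · intro _; exact (hux _).symm
          · rw [hφ1 b (by omega)]
            constructor
            · intro hadj; exact absurd hadj.symm (hnwx _)
            · intro hh; omega
        · rw [hφy a hay]
          rcases Nat.lt_or_ge (b:ℕ) 1 with hb1 | hb1
          · rw [hφ0 b (by omega)]
            constructor
            · intro hadj; exact absurd hadj.symm (hnuy _)
            · intro hh; omega
          · rw [hφ1 b (by omega)]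
            constructor
            · intro _; exact ⟨by omega, by omega⟩
            · intro _; exact (hwy _).symm
      · -- both leaves
        rcases Nat.lt_or_ge (a:ℕ) (s+2) with hax | hay <;>
          rcases Nat.lt_or_ge (b:ℕ) (s+2) with hbx | hby
        · rw [hφx a ha2 hax, hφx b hb2 hbx]
          constructor
          · intro hadj
            by_cases hr : (⟨(a:ℕ) - 2, by omega⟩ : Fin s) = ⟨(b:ℕ) - 2, by omega⟩
            · rw [hr] at hadj; exact absurd hadj (G.loopless.irrefl _)
            · exact absurd hadj (hnxx _ _ hr)
          · intro hh; omega
        · rw [hφx a ha2 hax, hφy b hby]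
          constructor
          · intro hadj; exact absurd hadj (hnxy _ _)
          · intro hh; omega
        · rw [hφy a hay, hφx b hb2 hbx]
          constructor
          · intro hadj; exact absurd hadj.symm (hnxy _ _)
          · intro hh; omega
        · rw [hφy a hay, hφy b hby]
          constructor
          · intro hadj
            by_cases hr : (⟨(a:ℕ) - (s+2), by omega⟩ : Fin s) = ⟨(b:ℕ) - (s+2), by omega⟩
            · rw [hr] at hadj; exact absurd hadj (G.loopless.irrefl _)
            · exact absurd hadj (hnyy _ _ hr)
          · intro hh; omega
  have hφinj : Function.Injective φ := by
    intro a b hab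
    have ha := a.isLt
    have hb := b.isLt
    by_contra hne
    have hne' : (a:ℕ) ≠ (b:ℕ) := fun hh => hne (Fin.ext hh)
    rcases Nat.lt_or_ge (a:ℕ) 1 with ha1 | ha1 <;> rcases Nat.lt_or_ge (b:ℕ) 1 with hb1 | hb1
    · omega
    · rw [hφ0 a (by omega)] at hab
      rcases Nat.lt_or_ge (b:ℕ) 2 with hb2 | hb2
      · rw [hφ1 b (by omega)] at hab; exact huw' hab
      · rcases Nat.lt_or_ge (b:ℕ) (s+2) with hbx | hby
        · rw [hφx b hb2 hbx] at hab; exact hux' _ hab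
        · rw [hφy b hby] at hab; exact huy _ hab
    · rw [hφ0 b (by omega)] at hab
      rcases Nat.lt_or_ge (a:ℕ) 2 with ha2 | ha2
      · rw [hφ1 a (by omega)] at hab; exact huw' hab.symm
      · rcases Nat.lt_or_ge (a:ℕ) (s+2) with hax | hay
        · rw [hφx a ha2 hax] at hab; exact hux' _ hab.symm
        · rw [hφy a hay] at hab; exact huy _ hab.symm
    · -- both ≥ 1
      rcases Nat.lt_or_ge (a:ℕ) 2 with ha2 | ha2
      · rw [hφ1 a (by omega)] at hab
        rcases Nat.lt_or_ge (b:ℕ) 2 with hb2 | hb2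
        · omega
        · rcases Nat.lt_or_ge (b:ℕ) (s+2) with hbx | hby
          · rw [hφx b hb2 hbx] at hab; exact hwx _ hab
          · rw [hφy b hby] at hab; exact hwy' _ hab
      · rcases Nat.lt_or_ge (b:ℕ) 2 with hb2 | hb2
        · rw [hφ1 b (by omega)] at hab
          rcases Nat.lt_or_ge (a:ℕ) (s+2) with hax | hay
          · rw [hφx a ha2 hax] at hab; exact hwx _ hab.symm
          · rw [hφy a hay] at hab; exact hwy' _ hab.symm
        · rcases Nat.lt_or_ge (a:ℕ) (s+2) with hax | hay <;>
            rcases Nat.lt_or_ge (b:ℕ) (s+2) with hbx | hby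
          · rw [hφx a ha2 hax, hφx b hb2 hbx] at hab
            have := hxinj hab
            simp only [Fin.mk.injEq] at this
            omega
          · rw [hφx a ha2 hax, hφy b hby] at hab; exact hxy _ _ hab
          · rw [hφy a hay, hφx b hb2 hbx] at hab; exact hxy _ _ hab.symm
          · rw [hφy a hay, hφy b hby] at hab
            have := hyinj hab
            simp only [Fin.mk.injEq] at this
            omega
  -- build the induced-subgraph isomorphism
  refine hfree (Set.range φ) ⟨?_⟩
  refine ⟨(Equiv.ofInjective φ hφinj).symm, ?_⟩
  intro a b
  show (doubleStarGraph s).Adj ((Equiv.ofInjective φ hφinj).symm a)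
        ((Equiv.ofInjective φ hφinj).symm b) ↔ G.Adj ↑a ↑b
  rw [← key]
  rw [Equiv.apply_ofInjective_symm hφinj, Equiv.apply_ofInjective_symm hφinj]

end AuxDoubleStar
section AuxTransversal

lemma template_k_le {V : Type*} [Fintype V] {G : SimpleGraph V} {s : ℕ} {L0 : Set V} {k : ℕ}
    {L : Fin k → Set V} (hT : IsTemplate G s L0 L) (hω : 2 ≤ G.cliqueNum) :
    k ≤ G.cliqueNum := by
  classical
  by_contra hk
  push_neg at hk
  have claim : ∀ t, (ht : t ≤ G.cliqueNum + 1) → ∃ g : Fin t → V,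
      (∀ r : Fin t, g r ∈ L (Fin.castLE (by omega) r)) ∧
      (∀ r r' : Fin t, r ≠ r' → G.Adj (g r) (g r')) := by
    intro t
    induction t with
    | zero => intro _; exact ⟨Fin.elim0, fun r => r.elim0, fun r => r.elim0⟩
    | succ t ih =>
      intro ht1
      obtain ⟨g, hgmem, hgadj⟩ := ih (by omega)
      set j : Fin k := ⟨t, by omega⟩ with hj
      set B : Finset V :=
        Finset.univ.biUnion (fun r : Fin t => ((L j).toFinset.filter (fun z => ¬ G.Adj (g r) z)))
        with hB
      have hfilter : ∀ r : Fin t,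
          (((L j).toFinset.filter (fun z => ¬ G.Adj (g r) z))).card ≤ G.cliqueNum ^ (s+3) := by
        intro r
        have hne : (Fin.castLE (by omega : t ≤ k) r) ≠ j := by
          intro hh
          have : (r : ℕ) = t := congrArg Fin.val hh
          omega
        have hcnt := hT.2.2.2.2.2 (Fin.castLE (by omega) r) j hne (g r) (hgmem r)
        have heq : ((L j).toFinset.filter (fun z => ¬ G.Adj (g r) z)).card
            = ({u ∈ L j | ¬ G.Adj (g r) u} : Set V).ncard := by
          rw [Set.ncard_eq_toFinset_card']
          congr 1
          ext z
          simp
        omega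
      have hBcard : B.card ≤ t * G.cliqueNum ^ (s+3) := by
        refine (Finset.card_biUnion_le).trans ?_
        have h2 := Finset.sum_le_card_nsmul (Finset.univ : Finset (Fin t))
          (fun r => (((L j).toFinset.filter (fun z => ¬ G.Adj (g r) z))).card)
          (G.cliqueNum ^ (s+3)) (fun r _ => hfilter r)
        simpa using h2
      have hLc : G.cliqueNum ^ (s+5) ≤ (L j).toFinset.card := by
        have := (hT.2.2.2.2.1 j).1
        rwa [Set.ncard_eq_toFinset_card'] at this
      have harith : t * G.cliqueNum ^ (s+3) < G.cliqueNum ^ (s+5) := by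
        have hp : 0 < G.cliqueNum ^ (s+3) := pow_pos (by omega) _
        have e1 : G.cliqueNum ^ (s+4) = G.cliqueNum ^ (s+3) * G.cliqueNum := by ring
        have e2 : G.cliqueNum ^ (s+5) = G.cliqueNum ^ (s+4) * G.cliqueNum := by ring
        have h1 : t * G.cliqueNum ^ (s+3) ≤ G.cliqueNum ^ (s+3) * G.cliqueNum := by
          rw [mul_comm]
          have ht' : t ≤ G.cliqueNum := by omega
          exact Nat.mul_le_mul_left _ ht'
        nlinarith
      have hnot : ¬ ((L j).toFinset ⊆ B) := by
        intro hsub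
        exact Nat.lt_irrefl _ (lt_of_le_of_lt
          (hLc.trans ((Finset.card_le_card hsub).trans hBcard)) harith)
      obtain ⟨v, hvL, hvB⟩ := Finset.not_subset.1 hnot
      have hvadj : ∀ r : Fin t, G.Adj (g r) v := by
        intro r
        by_contra hno
        exact hvB (Finset.mem_biUnion.2 ⟨r, Finset.mem_univ r,
          Finset.mem_filter.2 ⟨hvL, hno⟩⟩)
      refine ⟨fun r => if h : (r : ℕ) < t then g ⟨r, h⟩ else v, ?_, ?_⟩
      · intro r
        dsimp only
        by_cases h : (r : ℕ) < t
        · rw [dif_pos h]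
          have he : (Fin.castLE (by omega : t + 1 ≤ k) r) = Fin.castLE (by omega : t ≤ k) ⟨r, h⟩ :=
            Fin.ext rfl
          rw [he]
          exact hgmem ⟨r, h⟩
        · rw [dif_neg h]
          have he : (Fin.castLE (by omega : t + 1 ≤ k) r) = j := by
            apply Fin.ext
            have := r.isLt
            simp only [Fin.coe_castLE, hj]
            omega
          rw [he]
          simpa using hvL
      · intro r r' hne
        dsimp only
        by_cases h : (r : ℕ) < t <;> by_cases h' : (r' : ℕ) < t
        · rw [dif_pos h, dif_pos h']
          refine hgadj _ _ ?_
          intro hh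
          have hv : ((⟨(r:ℕ), h⟩ : Fin t) : ℕ) = ((⟨(r':ℕ), h'⟩ : Fin t) : ℕ) :=
            congrArg (fun z : Fin t => (z : ℕ)) hh
          exact hne (Fin.ext hv)
        · rw [dif_pos h, dif_neg h']
          exact hvadj _
        · rw [dif_neg h, dif_pos h']
          exact (hvadj _).symm
        · exfalso
          have h1 := r.isLt
          have h2 := r'.isLt
          exact hne (Fin.ext (by omega))
  obtain ⟨g, _, hgadj⟩ := claim (G.cliqueNum + 1) le_rfl
  have ginj : Function.Injective g := by
    intro r r' h
    by_contra hne
    exact (hgadj r r' hne).ne h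
  set C : Finset V := Finset.univ.image g with hC
  have hCcard : C.card = G.cliqueNum + 1 := by
    rw [hC, Finset.card_image_of_injective _ ginj, Finset.card_univ, Fintype.card_fin]
  have hclique : G.IsClique (↑C : Set V) := by
    intro a ha b hb hne
    simp only [hC, Finset.coe_image, Set.mem_image, Finset.mem_coe, Finset.mem_univ] at ha hb
    obtain ⟨r, -, rfl⟩ := ha
    obtain ⟨r', -, rfl⟩ := hb
    exact hgadj r r' (fun hh => hne (by rw [hh]))
  have := SimpleGraph.IsClique.card_le_cliqueNum (G := G) (tc := hclique)
  omega

end AuxTransversal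
section AuxWitness

/-- The data witnessing pendancy of `v`: indices `i, j`, vertices `u ∈ L j`, `w ∈ L i` and a
finset `E ⊆ L i` (which is `S \ {w}`). -/
def PendWitness {V : Type*} (G : SimpleGraph V) {k : ℕ} (L : Fin k → Set V) (s : ℕ)
    (v : V) (d : Fin k × Fin k × V × V × Finset V) : Prop :=
  d.2.2.1 ∈ L d.2.1 ∧ d.2.2.2.1 ∈ L d.1 ∧ (↑d.2.2.2.2 : Set V) ⊆ L d.1 ∧
  d.2.2.2.2.card = s ∧ d.2.2.2.1 ∉ d.2.2.2.2 ∧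
  IsStableSet G (insert d.2.2.2.1 (↑d.2.2.2.2 : Set V)) ∧
  (∀ z ∈ d.2.2.2.2, G.Adj d.2.2.1 z) ∧ G.Adj d.2.2.1 d.2.2.2.1 ∧
  ¬ G.Adj v d.2.2.1 ∧ G.Adj v d.2.2.2.1 ∧ (∀ z ∈ d.2.2.2.2, ¬ G.Adj v z)

lemma pendant_witness {V : Type*} [Fintype V] (G : SimpleGraph V) (s : ℕ) {k : ℕ}
    (L : Fin k → Set V) {v : V} (hp : TemplatePendant G s L v) :
    ∃ d : Fin k × Fin k × V × V × Finset V, PendWitness G L s v d := by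
  classical
  obtain ⟨i, j, hij, u, huj, S, hSL, hScard, hSst, hSadj, hvu, hone⟩ := hp
  obtain ⟨w, hw⟩ := Set.ncard_eq_one.1 hone
  have hwS : w ∈ S ∧ G.Adj v w := by
    have h1 : w ∈ ({w} : Set V) := rfl
    rw [← hw] at h1
    exact h1
  have hEeq : (S \ {w}).toFinset = S.toFinset.erase w := by
    ext z
    simp only [Set.mem_toFinset, Set.mem_diff, Set.mem_singleton_iff, Finset.mem_erase]
    tauto
  have hScardF : S.toFinset.card = s + 1 := by
    rw [← Set.ncard_eq_toFinset_card']; exact hScard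
  refine ⟨⟨i, j, u, w, (S \ {w}).toFinset⟩, huj, hSL hwS.1, ?_, ?_, ?_, ?_, ?_,
    hSadj w hwS.1, hvu, hwS.2, ?_⟩
  · rw [Set.coe_toFinset]
    exact Set.diff_subset.trans hSL
  · rw [hEeq, Finset.card_erase_of_mem (Set.mem_toFinset.2 hwS.1), hScardF]
    omega
  · simp
  · rw [Set.coe_toFinset, Set.insert_diff_singleton, Set.insert_eq_self.mpr hwS.1]
    exact hSst
  · intro z hz
    rw [Set.mem_toFinset] at hz
    exact hSadj z hz.1
  · intro z hz hadj
    rw [Set.mem_toFinset] at hz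
    have : z ∈ {w' ∈ S | G.Adj v w'} := ⟨hz.1, hadj⟩
    rw [hw] at this
    exact hz.2 this

lemma pend_fiber_stable_lt {V : Type*} (G : SimpleGraph V) (s : ℕ)
    (hfree : IsInducedFree G (doubleStarGraph s))
    (u w : V) (E : Finset V)
    (hEcard : E.card = s) (hwE : w ∉ E)
    (hstabE : IsStableSet G (insert w (↑E : Set V)))
    (huE : ∀ z ∈ E, G.Adj u z) (huw : G.Adj u w)
    (F : Finset V)
    (hFu : ∀ v ∈ F, ¬ G.Adj v u)
    (hFw : ∀ v ∈ F, G.Adj v w)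
    (hFE : ∀ v ∈ F, ∀ z ∈ E, ¬ G.Adj v z)
    (hFnu : ∀ v ∈ F, v ≠ u)
    (hFnE : ∀ v ∈ F, ∀ z ∈ E, v ≠ z)
    (T' : Finset V) (hT' : T' ⊆ F) (hstable : IsStableSet G ↑T') : T'.card < s := by
  classical
  by_contra hge
  push_neg at hge
  obtain ⟨T'', hT''sub, hT''card⟩ := Finset.exists_subset_card_eq hge
  set eE := Finset.equivFinOfCardEq hEcard with heE
  set eY := Finset.equivFinOfCardEq hT''card with heY
  set x : Fin s → V := fun r => ((eE.symm r) : V) with hx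
  set y : Fin s → V := fun r => ((eY.symm r) : V) with hy
  have hxmem : ∀ r, x r ∈ E := fun r => (eE.symm r).2
  have hymem : ∀ r, y r ∈ T'' := fun r => (eY.symm r).2
  have hyF : ∀ r, y r ∈ F := fun r => hT' (hT''sub (hymem r))
  have hxinj : Function.Injective x := fun a b h =>
    eE.symm.injective (Subtype.coe_injective h)
  have hyinj : Function.Injective y := fun a b h =>
    eY.symm.injective (Subtype.coe_injective h)
  refine no_double_star G s hfree u w x y hxinj hyinj ?_ ?_ ?_ huw ?_ ?_ ?_ ?_ ?_ ?_ ?_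
  · -- w ≠ x r
    intro r h
    exact hwE (h ▸ hxmem r)
  · -- u ≠ y r
    intro r h
    exact hFnu (y r) (hyF r) h.symm
  · -- x r ≠ y r'
    intro r r' h
    exact hFnE (y r') (hyF r') (x r) (hxmem r) h.symm
  · -- u adj x
    intro r
    exact huE (x r) (hxmem r)
  · -- w adj y
    intro r
    exact (hFw (y r) (hyF r)).symm
  · -- ¬ w adj x
    intro r
    exact hstabE w (Set.mem_insert _ _) (x r)
      (Set.mem_insert_of_mem _ (Finset.mem_coe.2 (hxmem r)))
      (fun h => hwE (h ▸ hxmem r))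
  · -- ¬ u adj y
    intro r h
    exact hFu (y r) (hyF r) h.symm
  · -- x stable
    intro r r' hne
    exact hstabE (x r) (Set.mem_insert_of_mem _ (Finset.mem_coe.2 (hxmem r)))
      (x r') (Set.mem_insert_of_mem _ (Finset.mem_coe.2 (hxmem r')))
      (fun h => hne (hxinj h))
  · -- y stable
    intro r r' hne
    exact hstable (y r) (Finset.mem_coe.2 (hT''sub (hymem r)))
      (y r') (Finset.mem_coe.2 (hT''sub (hymem r')))
      (fun h => hne (hyinj h))
  · -- ¬ x adj y
    intro r r' h
    exact hFE (y r') (hyF r') (x r) (hxmem r) h.symm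

end AuxWitness
/-- If `G` is `H_s`-free and `𝓛` is an optimal `s`-template, then at most
`14^{s+2} ω^{s²+9s+14}` vertices of `N(𝓛)` are pendant. -/
theorem template_few_pendant {V : Type*} [Fintype V] (G : SimpleGraph V) (s : ℕ) (hs : 1 ≤ s)
    (hfree : IsInducedFree G (doubleStarGraph s))
    (L0 : Set V) (k : ℕ) (L : Fin k → Set V) (hT : IsOptimalTemplate G s L0 L) :
    ({v ∈ templateNbhd G L0 L | TemplatePendant G s L v}).ncard
      ≤ 14 ^ (s+2) * G.cliqueNum ^ (s*s + 9*s + 14) := by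
  classical
  set P : Set V := {v ∈ templateNbhd G L0 L | TemplatePendant G s L v} with hPdef
  rcases Set.eq_empty_or_nonempty P with hPe | ⟨v₀, hv₀⟩
  · rw [hPe]; simp
  · have hω2 : 2 ≤ G.cliqueNum := by
      obtain ⟨d₀, hd₀⟩ := pendant_witness G s L hv₀.2
      have huw : G.Adj d₀.2.2.1 d₀.2.2.2.1 := hd₀.2.2.2.2.2.2.2.1
      have hne : d₀.2.2.1 ≠ d₀.2.2.2.1 := huw.ne
      have hcl : G.IsClique (↑({d₀.2.2.1, d₀.2.2.2.1} : Finset V) : Set V) := by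
        intro a ha b hb hab
        simp only [Finset.coe_insert, Finset.coe_singleton, Set.mem_insert_iff,
          Set.mem_singleton_iff] at ha hb
        rcases ha with rfl | rfl <;> rcases hb with rfl | rfl
        · exact absurd rfl hab
        · exact huw
        · exact huw.symm
        · exact absurd rfl hab
      have hcard : ({d₀.2.2.1, d₀.2.2.2.1} : Finset V).card = 2 := by
        rw [Finset.card_insert_of_notMem (by simp [hne]), Finset.card_singleton]
      have := SimpleGraph.IsClique.card_le_cliqueNum (G := G) (tc := hcl)
      omega
    have hkle : k ≤ G.cliqueNum := template_k_le hT.1 hω2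
    have hch : ∀ v ∈ P, ∃ d, PendWitness G L s v d := fun v hv => pendant_witness G s L hv.2
    set f : V → Fin k × Fin k × V × V × Finset V := fun v =>
      if h : v ∈ P then (hch v h).choose else (hch v₀ hv₀).choose with hf
    have hfQ : ∀ v (h : v ∈ P), PendWitness G L s v (f v) := by
      intro v h
      rw [hf]
      dsimp only
      rw [dif_pos h]
      exact (hch v h).choose_spec
    set M := 14 * G.cliqueNum ^ (s+6) with hM
    have hLcard : ∀ i : Fin k, (L i).toFinset.card ≤ M := by
      intro i
      have := (hT.1.2.2.2.2.1 i).2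
      rwa [Set.ncard_eq_toFinset_card'] at this
    set T : Finset (Fin k × Fin k × V × V × Finset V) :=
      (Finset.univ : Finset (Fin k × Fin k)).biUnion (fun p =>
        ((L p.2).toFinset ×ˢ ((L p.1).toFinset ×ˢ ((L p.1).toFinset.powersetCard s))).image
          (fun q => (p.1, p.2, q.1, q.2.1, q.2.2))) with hTdef
    have hfT : ∀ v ∈ P, f v ∈ T := by
      intro v hv
      obtain ⟨h1, h2, h3, h4, -, -, -, -, -, -, -⟩ := hfQ v hv
      refine Finset.mem_biUnion.2 ⟨((f v).1, (f v).2.1), Finset.mem_univ _, ?_⟩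
      refine Finset.mem_image.2 ⟨((f v).2.2.1, (f v).2.2.2.1, (f v).2.2.2.2), ?_, rfl⟩
      refine Finset.mem_product.2 ⟨?_, Finset.mem_product.2 ⟨?_, ?_⟩⟩
      · exact Set.mem_toFinset.2 h1
      · exact Set.mem_toFinset.2 h2
      · exact Finset.mem_powersetCard.2
          ⟨fun z hz => Set.mem_toFinset.2 (h3 (Finset.mem_coe.2 hz)), h4⟩
    have hfib : ∀ d, (P.toFinset.filter (fun v => f v = d)).card ≤ G.cliqueNum ^ s := by
      intro d
      rcases Finset.eq_empty_or_nonempty (P.toFinset.filter (fun v => f v = d)) with hFe | hFne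
      · rw [hFe]; simp
      · obtain ⟨v₁, hv₁⟩ := hFne
        have hQ : ∀ v ∈ P.toFinset.filter (fun v => f v = d), PendWitness G L s v d := by
          intro v hv
          obtain ⟨hvP, hfd⟩ := Finset.mem_filter.1 hv
          exact hfd ▸ hfQ v (Set.mem_toFinset.1 hvP)
        obtain ⟨-, -, q3, q4, q5, q6, q7, q8, -, -, -⟩ := hQ v₁ hv₁
        have hstab : ∀ T' ⊆ P.toFinset.filter (fun v => f v = d),
            IsStableSet G ↑T' → T'.card < s := by
          intro T' hT'sub hst
          refine pend_fiber_stable_lt G s hfree d.2.2.1 d.2.2.2.1 d.2.2.2.2 q4 q5 q6 q7 q8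
            _ ?_ ?_ ?_ ?_ ?_ T' hT'sub hst
          · intro v hv; exact (hQ v hv).2.2.2.2.2.2.2.2.1
          · intro v hv; exact (hQ v hv).2.2.2.2.2.2.2.2.2.1
          · intro v hv; exact (hQ v hv).2.2.2.2.2.2.2.2.2.2
          · intro v hv heq
            have hvP : v ∈ P := Set.mem_toFinset.1 (Finset.mem_filter.1 hv).1
            exact hvP.1.1 (heq ▸ Set.mem_union_right _ (Set.mem_iUnion.2 ⟨d.2.1, (hQ v hv).1⟩))
          · intro v hv z hz heq
            have hvP : v ∈ P := Set.mem_toFinset.1 (Finset.mem_filter.1 hv).1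
            exact hvP.1.1 (heq ▸ Set.mem_union_right _
              (Set.mem_iUnion.2 ⟨d.1, q3 (Finset.mem_coe.2 hz)⟩))
        have hcli : ∀ C ⊆ P.toFinset.filter (fun v => f v = d),
            G.IsClique (↑C : Set V) → C.card ≤ G.cliqueNum :=
          fun C _ hC => SimpleGraph.IsClique.card_le_cliqueNum (G := G) (tc := hC)
        exact (ramsey_card_lt G (s + G.cliqueNum) s G.cliqueNum le_rfl _ hstab hcli hω2).le
    have hsub : P.toFinset ⊆ T.biUnion (fun d => P.toFinset.filter (fun v => f v = d)) := by
      intro v hv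
      exact Finset.mem_biUnion.2
        ⟨f v, hfT v (Set.mem_toFinset.1 hv), Finset.mem_filter.2 ⟨hv, rfl⟩⟩
    have hcount : P.toFinset.card ≤ T.card * G.cliqueNum ^ s := by
      refine (Finset.card_le_card hsub).trans ?_
      refine (Finset.card_biUnion_le).trans ?_
      have h2 := Finset.sum_le_card_nsmul T
        (fun d => (P.toFinset.filter (fun v => f v = d)).card) (G.cliqueNum ^ s)
        (fun d _ => hfib d)
      simpa using h2
    have hTcard : T.card ≤ k * k * (M * (M * M ^ s)) := by
      rw [hTdef]
      refine (Finset.card_biUnion_le).trans ?_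
      have hper : ∀ p : Fin k × Fin k,
          (((L p.2).toFinset ×ˢ ((L p.1).toFinset ×ˢ ((L p.1).toFinset.powersetCard s))).image
            (fun q => (p.1, p.2, q.1, q.2.1, q.2.2))).card ≤ M * (M * M ^ s) := by
        intro p
        refine (Finset.card_image_le).trans ?_
        rw [Finset.card_product, Finset.card_product, Finset.card_powersetCard]
        refine Nat.mul_le_mul (hLcard _) (Nat.mul_le_mul (hLcard _) ?_)
        exact (Nat.choose_le_pow _ _).trans (Nat.pow_le_pow_left (hLcard _) s)
      refine (Finset.sum_le_card_nsmul _ _ _ (fun p _ => hper p)).trans ?_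
      simp [Finset.card_univ]
    rw [Set.ncard_eq_toFinset_card']
    calc P.toFinset.card ≤ T.card * G.cliqueNum ^ s := hcount
      _ ≤ (k * k * (M * (M * M ^ s))) * G.cliqueNum ^ s := Nat.mul_le_mul_right _ hTcard
      _ ≤ (G.cliqueNum * G.cliqueNum * (M * (M * M ^ s))) * G.cliqueNum ^ s := by
          exact Nat.mul_le_mul_right _ (Nat.mul_le_mul_right _ (Nat.mul_le_mul hkle hkle))
      _ = 14 ^ (s+2) * G.cliqueNum ^ (s*s + 9*s + 14) := by
          rw [hM]
          ring
end

section
/- Let s ≥ 1 be an integer, let G be an H_s-free graph with clique number ω, and let 𝓛 = (L_0, L_1, …, L_k) be an optimal s-template in G whose value is at least 28ω^{s+6}. Let c satisfy the Kővári–Sós–Turán-type bound for H_s. Then the set of all vertices of N(𝓛) that are dense with respect to 𝓛 induces a subgraph of chromatic number at most (14ω^{s+6})^{c+1}·ω. -/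
open SimpleGraph Set

lemma tmpl_ncard_iUnion_le {α : Type*} [Fintype α] : ∀ (n : ℕ) (f : Fin n → Set α),
    (⋃ i, f i).ncard ≤ ∑ i, (f i).ncard := by
  intro n
  induction n with
  | zero => intro f; simp
  | succ n ih =>
    intro f
    have hU : (⋃ i, f i) = f 0 ∪ ⋃ i : Fin n, f i.succ := by
      ext x
      simp only [Set.mem_iUnion, Set.mem_union]
      constructor
      · rintro ⟨i, hi⟩
        rcases Fin.eq_zero_or_eq_succ i with h0 | ⟨j, rfl⟩
        · exact Or.inl (h0 ▸ hi)
        · exact Or.inr ⟨j, hi⟩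
      · rintro (h | ⟨i, hi⟩)
        · exact ⟨0, h⟩
        · exact ⟨i.succ, hi⟩
    rw [hU, Fin.sum_univ_succ]
    exact le_trans (Set.ncard_union_le _ _) (Nat.add_le_add_left (ih _) _)

lemma tmpl_degeneracy_colorable {W : Type} [Fintype W] (G : SimpleGraph W) (d : ℕ)
    (h : DegeneracyAtMost G d) : G.Colorable (d + 1) := by
  classical
  suffices h2 : ∀ (n : ℕ) (s : Finset W), s.card ≤ n →
      ∃ f : W → Fin (d + 1), ∀ a ∈ s, ∀ b ∈ s, G.Adj a b → f a ≠ f b by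
    obtain ⟨f, hf⟩ := h2 (Finset.univ.card) Finset.univ le_rfl
    exact ⟨SimpleGraph.Coloring.mk f fun hab =>
      hf _ (Finset.mem_univ _) _ (Finset.mem_univ _) hab⟩
  intro n
  induction n with
  | zero =>
    intro s hs
    have : s = ∅ := Finset.card_eq_zero.mp (Nat.le_zero.mp hs)
    subst this
    exact ⟨fun _ => 0, by simp⟩
  | succ n ih =>
    intro s hs
    rcases s.eq_empty_or_nonempty with rfl | hne
    · exact ⟨fun _ => 0, by simp⟩
    · set H : G.Subgraph :=
        { verts := ↑s
          Adj := fun a b => a ∈ s ∧ b ∈ s ∧ G.Adj a b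
          adj_sub := fun h => h.2.2
          edge_vert := fun h => h.1
          symm := ⟨fun a b h => ⟨h.2.1, h.1, h.2.2.symm⟩⟩ } with hH
      obtain ⟨v, hv, hdeg⟩ := h H (by simpa [hH] using hne)
      have hvs : v ∈ s := by simpa [hH] using hv
      obtain ⟨f, hf⟩ := ih (s.erase v) (by
        have h1 := Finset.card_erase_of_mem hvs
        have h2 : 1 ≤ s.card := Finset.card_pos.mpr ⟨v, hvs⟩
        omega)
      have hnb : H.neighborSet v = ↑(s.filter (fun w => G.Adj v w)) := by
        ext w
        simp only [SimpleGraph.Subgraph.mem_neighborSet, hH, Finset.coe_filter, Set.mem_setOf_eq]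
        exact ⟨fun hw => ⟨hw.2.1, hw.2.2⟩, fun hw => ⟨hvs, hw.1, hw.2⟩⟩
      have hcard : (s.filter (fun w => G.Adj v w)).card ≤ d := by
        rw [hnb, Set.ncard_coe_finset] at hdeg
        exact hdeg
      obtain ⟨c0, hc0⟩ : ∃ c0 : Fin (d + 1), c0 ∉ (s.filter (fun w => G.Adj v w)).image f := by
        by_contra h'
        push_neg at h'
        have hsub : (Finset.univ : Finset (Fin (d + 1))) ⊆
            (s.filter (fun w => G.Adj v w)).image f := fun c _ => h' c
        have := Finset.card_le_card hsub
        have h1 : ((s.filter (fun w => G.Adj v w)).image f).card ≤ d :=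
          le_trans (Finset.card_image_le) hcard
        simp [Finset.card_univ] at this
        omega
      refine ⟨Function.update f v c0, ?_⟩
      intro a ha b hb hab
      by_cases hav : a = v <;> by_cases hbv : b = v
      · exact absurd hab (by rw [hav, hbv]; exact G.loopless.irrefl v)
      · subst hav
        rw [Function.update_self, Function.update_of_ne hbv]
        intro hEq
        exact hc0 (hEq ▸ Finset.mem_image_of_mem f (Finset.mem_filter.mpr ⟨hb, hab⟩))
      · subst hbv
        rw [Function.update_self, Function.update_of_ne hav]
        intro hEq
        exact hc0 (hEq ▸ Finset.mem_image_of_mem f (Finset.mem_filter.mpr ⟨ha, hab.symm⟩))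
      · rw [Function.update_of_ne hav, Function.update_of_ne hbv]
        exact hf a (Finset.mem_erase.mpr ⟨hav, ha⟩) b (Finset.mem_erase.mpr ⟨hbv, hb⟩) hab

lemma tmpl_free_of_embed {V W X : Type*} (G : SimpleGraph V) (G' : SimpleGraph W)
    (H : SimpleGraph X) (f : W → V) (hinj : Function.Injective f)
    (hadj : ∀ a b, G'.Adj a b ↔ G.Adj (f a) (f b))
    (hfree : IsInducedFree G H) : IsInducedFree G' H := by
  intro s hne
  obtain ⟨iso⟩ := hne
  apply hfree (f '' s)
  have isoB : G'.induce s ≃g G.induce (f '' s) :=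
    { toEquiv := Equiv.Set.image f s hinj
      map_rel_iff' := by
        intro a b
        simp only [Equiv.Set.image_apply, comap_adj, Function.Embedding.coe_subtype]
        exact (hadj a.1 b.1).symm }
  exact ⟨isoB.symm.trans iso⟩

lemma tmpl_colorable_of_KST {V : Type*} [Fintype V] (G : SimpleGraph V) (s c t : ℕ)
    (hfree : IsInducedFree G (doubleStarGraph s)) (hc : KSTBound s c)
    (hktt : ∀ A B : Finset V, A.card = t → B.card = t → Disjoint A B →
      (∀ a ∈ A, ∀ b ∈ B, G.Adj a b) → False) :
    G.Colorable (t ^ c) := by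
  classical
  set n := Fintype.card V with hn
  set e : V ≃ Fin n := Fintype.equivFin V with he
  set G' : SimpleGraph (Fin n) :=
    { Adj := fun a b => G.Adj (e.symm a) (e.symm b)
      symm := ⟨fun a b h => h.symm⟩
      loopless := ⟨fun a h => G.loopless.irrefl _ h⟩ } with hG'
  have hfree' : IsInducedFree G' (doubleStarGraph s) :=
    tmpl_free_of_embed G G' _ (fun a => e.symm a) e.symm.injective (fun _ _ => Iff.rfl) hfree
  rcases hc (Fin n) G' hfree' t with hK | ⟨D, hD, hdeg⟩
  · obtain ⟨A, B, hA, hB, hAB, hadj2⟩ := hK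
    exact (hktt (A.image (fun a => e.symm a)) (B.image (fun a => e.symm a))
      (by rw [Finset.card_image_of_injective _ e.symm.injective, hA])
      (by rw [Finset.card_image_of_injective _ e.symm.injective, hB])
      ((Finset.disjoint_image e.symm.injective).mpr hAB)
      (by
        intro a ha b hb
        obtain ⟨a', ha', rfl⟩ := Finset.mem_image.mp ha
        obtain ⟨b', hb', rfl⟩ := Finset.mem_image.mp hb
        exact hadj2 a' ha' b' hb')).elim
  · have h1 : G'.Colorable (D + 1) := tmpl_degeneracy_colorable G' D hdeg
    have h2 : G'.Colorable (t ^ c) := h1.mono (by omega)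
    have emb : G ↪g G' := ⟨e.toEmbedding, by intro a b; simp [hG']⟩
    exact SimpleGraph.Colorable.of_hom emb.toHom h2

lemma tmpl_L0_card {V : Type*} [Fintype V] (G : SimpleGraph V) (L0 : Set V)
    (h : G.IsClique L0) : L0.ncard ≤ G.cliqueNum := by
  classical
  rw [Set.ncard_eq_toFinset_card L0 (Set.toFinite L0)]
  exact SimpleGraph.IsClique.card_le_cliqueNum
    (tc := by rwa [Set.Finite.coe_toFinset])

lemma tmpl_adj_cliqueNum {V : Type*} [Fintype V] (G : SimpleGraph V) {a b : V}
    (h : G.Adj a b) : 2 ≤ G.cliqueNum := by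
  classical
  have hne := G.ne_of_adj h
  have hclique : G.IsClique (↑({a, b} : Finset V)) := by
    rw [Finset.coe_insert, Finset.coe_singleton]
    exact SimpleGraph.isClique_pair.mpr (fun _ => h)
  have hle := SimpleGraph.IsClique.card_le_cliqueNum (tc := hclique)
  rwa [Finset.card_pair hne] at hle

lemma tmpl_k_le_omega {V : Type*} [Fintype V] (G : SimpleGraph V) (s : ℕ) (L0 : Set V) {k : ℕ}
    (L : Fin k → Set V) (hT : IsTemplate G s L0 L) (hω : 2 ≤ G.cliqueNum) :
    k ≤ G.cliqueNum := by
  classical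
  set ω := G.cliqueNum with hωdef
  by_contra hk
  push_neg at hk
  -- hk : ω < k
  have hclaim : ∀ m : ℕ, (hm : m ≤ ω + 1) → ∃ f : Fin m → V,
      (∀ i : Fin m, f i ∈ L (Fin.castLE (by omega) i)) ∧
      (∀ i j : Fin m, i ≠ j → G.Adj (f i) (f j)) := by
    intro m
    induction m with
    | zero => exact fun _ => ⟨Fin.elim0, fun i => i.elim0, fun i => i.elim0⟩
    | succ m ih =>
      intro hm
      obtain ⟨f, hfmem, hfadj⟩ := ih (Nat.le_of_succ_le hm)
      have hmk : m < k := by omega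
      set p : Fin k := ⟨m, hmk⟩ with hp
      set Bad : Set V := ⋃ i : Fin m, {w ∈ L p | ¬ G.Adj (f i) w} with hBad
      have hBadcard : Bad.ncard ≤ m * ω ^ (s+3) := by
        refine le_trans (tmpl_ncard_iUnion_le m _) ?_
        have : ∀ i : Fin m, ({w ∈ L p | ¬ G.Adj (f i) w}).ncard ≤ ω ^ (s+3) := by
          intro i
          refine hT.2.2.2.2.2 (Fin.castLE (by omega) i) p ?_ (f i) (hfmem i)
          intro hEq
          have : (i : ℕ) = m := congrArg Fin.val hEq
          omega
        calc ∑ i : Fin m, ({w ∈ L p | ¬ G.Adj (f i) w}).ncard ≤ ∑ _i : Fin m, ω ^ (s+3) :=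
              Finset.sum_le_sum fun i _ => this i
          _ = m * ω ^ (s+3) := by simp [Finset.sum_const, Finset.card_univ, mul_comm]
      have hBadlt : Bad.ncard < (L p).ncard := by
        have h1 : m * ω ^ (s+3) ≤ ω * ω ^ (s+3) := by
          have : m ≤ ω := by omega
          exact Nat.mul_le_mul_right _ this
        have h2 : ω * ω ^ (s+3) < ω ^ (s+5) := by
          have : ω ^ (s+4) < ω ^ (s+5) := Nat.pow_lt_pow_right hω (by omega)
          calc ω * ω ^ (s+3) = ω ^ (s+4) := by ring
            _ < ω ^ (s+5) := this
        exact lt_of_le_of_lt (le_trans hBadcard h1) (lt_of_lt_of_le h2 (hT.2.2.2.2.1 p).1)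
      obtain ⟨w, hwL, hwBad⟩ : ∃ w, w ∈ L p ∧ w ∉ Bad := by
        by_contra hcon
        push_neg at hcon
        exact absurd (Set.ncard_le_ncard (fun x hx => hcon x hx) (Set.toFinite _))
          (not_le.mpr hBadlt)
      have hwadj : ∀ i : Fin m, G.Adj (f i) w := by
        intro i
        by_contra hnadj
        exact hwBad (Set.mem_iUnion.mpr ⟨i, ⟨hwL, hnadj⟩⟩)
      refine ⟨fun i => if h : (i : ℕ) < m then f ⟨i, h⟩ else w, ?_, ?_⟩
      · intro i
        by_cases h : (i : ℕ) < m
        · simp only [dif_pos h]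
          exact hfmem ⟨i, h⟩
        · simp only [dif_neg h]
          have : (i : ℕ) = m := by omega
          convert hwL using 2
          exact Fin.ext this
      · intro i j hij
        by_cases hi : (i : ℕ) < m <;> by_cases hj : (j : ℕ) < m
        · simp only [dif_pos hi, dif_pos hj]
          refine hfadj _ _ ?_
          intro hEq
          have h2 : (i : ℕ) = (j : ℕ) := congrArg (fun x : Fin m => (x : ℕ)) hEq
          exact hij (Fin.ext h2)
        · simp only [dif_pos hi, dif_neg hj]
          exact hwadj ⟨i, hi⟩
        · simp only [dif_neg hi, dif_pos hj]
          exact (hwadj ⟨j, hj⟩).symm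
        · exact absurd (Fin.ext (by omega : (i : ℕ) = (j : ℕ))) hij
  obtain ⟨f, hfmem, hfadj⟩ := hclaim (ω + 1) le_rfl
  have hfinj : Function.Injective f := by
    intro i j hEq
    by_contra hne
    exact G.ne_of_adj (hfadj i j hne) hEq
  set T : Finset V := Finset.univ.image f with hT2
  have hTcard : T.card = ω + 1 := by
    rw [hT2, Finset.card_image_of_injective _ hfinj, Finset.card_univ, Fintype.card_fin]
  have hTclique : G.IsClique ↑T := by
    intro a ha b hb hab
    simp only [hT2, Finset.coe_image, Set.mem_image, Finset.coe_univ, Set.image_univ] at ha hb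
    obtain ⟨i, rfl⟩ := ha
    obtain ⟨j, rfl⟩ := hb
    exact hfadj i j (fun h => hab (congrArg f h))
  have := SimpleGraph.IsClique.card_le_cliqueNum (tc := hTclique)
  omega

lemma tmpl_no_ktt {V : Type*} [Fintype V] (G : SimpleGraph V) (s : ℕ) (L0 : Set V) {k : ℕ}
    (L : Fin k → Set V) (hT : IsOptimalTemplate G s L0 L) (hω : 2 ≤ G.cliqueNum)
    (j : Fin k) (u : V) (hu : u ∈ L j) (A B : Finset V)
    (hAn : ∀ v ∈ A, v ∉ templateVerts L0 L) (hBn : ∀ v ∈ B, v ∉ templateVerts L0 L)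
    (hAd : ∀ v ∈ A, ∀ i : Fin k, i ≠ j →
      14 * ({w ∈ L i | G.Adj u w ∧ ¬ G.Adj v w}).ncard < G.cliqueNum ^ (s+2))
    (hBd : ∀ v ∈ B, ∀ i : Fin k, i ≠ j →
      14 * ({w ∈ L i | G.Adj u w ∧ ¬ G.Adj v w}).ncard < G.cliqueNum ^ (s+2))
    (hAcard : A.card = 14 * G.cliqueNum ^ (s+6))
    (hBcard : B.card = 14 * G.cliqueNum ^ (s+6))
    (hABdisj : Disjoint A B)
    (hABadj : ∀ a ∈ A, ∀ b ∈ B, G.Adj a b) : False := by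
  classical
  set ω := G.cliqueNum with hωdef
  set q2 := ω ^ (s+2) with hq2
  set q3 := ω ^ (s+3) with hq3
  set q5 := ω ^ (s+5) with hq5
  set q6 := ω ^ (s+6) with hq6
  have hω1 : 1 ≤ ω := le_trans (by norm_num) hω
  have hq61 : 1 ≤ q6 := Nat.one_le_pow _ _ (by omega)
  have hq35 : q3 ≤ q5 := Nat.pow_le_pow_right hω1 (by omega)
  have hq23 : q2 ≤ q3 := Nat.pow_le_pow_right hω1 (by omega)
  have hq56 : q5 ≤ q6 := Nat.pow_le_pow_right hω1 (by omega)
  have he56 : ω * q5 = q6 := by rw [hq5, hq6, ← pow_succ']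
  have he3526 : q3 * q5 = q2 * q6 := by
    rw [hq2, hq3, hq5, hq6, ← pow_add, ← pow_add]; congr 1; omega
  have hk : k ≤ ω := tmpl_k_le_omega G s L0 L hT.1 hω
  set AB : Finset V := A ∪ B with hAB
  have hABcard : AB.card = 28 * q6 := by
    rw [hAB, Finset.card_union_of_disjoint hABdisj, hAcard, hBcard]; ring
  set Lf : Fin k → Finset V := fun i => (Set.toFinite (L i)).toFinset with hLf
  have hLfmem : ∀ i x, x ∈ Lf i ↔ x ∈ L i := by
    intro i x; rw [hLf]; exact Set.Finite.mem_toFinset _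
  set Mf : Fin k → Finset V := fun i => (Lf i).filter (fun w => G.Adj u w) with hMf
  set Bf : Fin k → Finset V := fun i =>
    (Mf i).filter (fun w => q3 + 1 ≤ (AB.filter (fun x => ¬ G.Adj w x)).card) with hBf
  set Gf : Fin k → Finset V := fun i => Mf i \ Bf i with hGf
  have hGfL : ∀ i, ∀ x ∈ Gf i, x ∈ L i := by
    intro i x hx
    rw [hGf] at hx
    exact (hLfmem i x).mp (Finset.mem_filter.mp (Finset.mem_sdiff.mp hx).1).1
  have hGfgood : ∀ i, ∀ x ∈ Gf i, (AB.filter (fun y => ¬ G.Adj x y)).card ≤ q3 := by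
    intro i x hx
    rw [hGf] at hx
    obtain ⟨hxM, hxB⟩ := Finset.mem_sdiff.mp hx
    rw [hBf, Finset.mem_filter] at hxB
    push_neg at hxB
    exact Nat.lt_succ_iff.mp (hxB hxM)
  have hq51 : 1 ≤ q5 := Nat.one_le_pow _ _ (by omega)
  -- counting bound for Bf
  have hBfcard : ∀ i : Fin k, i ≠ j → (Bf i).card < 2 * q5 := by
    intro i hij
    set cnt : V → ℕ := fun v => ((Mf i).filter (fun w => ¬ G.Adj v w)).card with hcnt
    have stepA : ∀ v ∈ AB, 14 * cnt v + 1 ≤ q2 := by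
      intro v hv
      have hd : 14 * ({w ∈ L i | G.Adj u w ∧ ¬ G.Adj v w}).ncard < q2 := by
        rcases Finset.mem_union.mp hv with h | h
        · exact hAd v h i hij
        · exact hBd v h i hij
      have hset : {w ∈ L i | G.Adj u w ∧ ¬ G.Adj v w}
          = ↑((Mf i).filter (fun w => ¬ G.Adj v w)) := by
        ext w
        simp only [Set.mem_setOf_eq, Finset.coe_filter, hMf, Finset.mem_filter]
        constructor
        · rintro ⟨h1, h2, h3⟩; exact ⟨⟨(hLfmem i w).mpr h1, h2⟩, h3⟩
        · rintro ⟨⟨h1, h2⟩, h3⟩; exact ⟨(hLfmem i w).mp h1, h2, h3⟩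
      rw [hset, Set.ncard_coe_finset] at hd
      have hcv : cnt v = ((Mf i).filter (fun w => ¬ G.Adj v w)).card := rfl
      omega
    have stepB : 14 * (∑ v ∈ AB, cnt v) + 28 * q6 ≤ 28 * (q2 * q6) := by
      have h1 : ∑ v ∈ AB, (14 * cnt v + 1) ≤ ∑ _v ∈ AB, q2 := Finset.sum_le_sum stepA
      rw [Finset.sum_add_distrib, ← Finset.mul_sum, Finset.sum_const, Finset.sum_const,
        hABcard, smul_eq_mul, smul_eq_mul, mul_one] at h1
      calc 14 * (∑ v ∈ AB, cnt v) + 28 * q6 ≤ 28 * q6 * q2 := h1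
        _ = 28 * (q2 * q6) := by ring
    have stepC : ∑ v ∈ AB, cnt v = ∑ w ∈ Mf i, (AB.filter (fun x => ¬ G.Adj w x)).card := by
      simp only [hcnt, Finset.card_filter]
      rw [Finset.sum_comm]
      refine Finset.sum_congr rfl fun w _ => Finset.sum_congr rfl fun v _ => ?_
      rw [G.adj_comm]
    have stepD : (q3 + 1) * (Bf i).card ≤ ∑ v ∈ AB, cnt v := by
      rw [stepC]
      calc (q3 + 1) * (Bf i).card = (Bf i).card • (q3 + 1) := by
            rw [smul_eq_mul, mul_comm]
        _ ≤ ∑ w ∈ Bf i, (AB.filter (fun x => ¬ G.Adj w x)).card := by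
            refine Finset.card_nsmul_le_sum _ _ _ (fun w hw => ?_)
            have := Finset.mem_filter.mp (by rw [hBf] at hw; exact hw)
            exact this.2
        _ ≤ ∑ w ∈ Mf i, (AB.filter (fun x => ¬ G.Adj w x)).card := by
            refine Finset.sum_le_sum_of_subset ?_
            rw [hBf]; exact Finset.filter_subset _ _
    by_contra hX
    push_neg at hX
    have c1 : (q3 + 1) * (2 * q5) ≤ (q3 + 1) * (Bf i).card := Nat.mul_le_mul_left _ hX
    have c2 : (q3 + 1) * (2 * q5) = 2 * (q2 * q6) + 2 * q5 := by
      calc (q3 + 1) * (2 * q5) = 2 * (q3 * q5) + 2 * q5 := by ring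
        _ = 2 * (q2 * q6) + 2 * q5 := by rw [he3526]
    have c3 : 14 * ((q3 + 1) * (Bf i).card) ≤ 14 * ∑ v ∈ AB, cnt v :=
      Nat.mul_le_mul_left _ stepD
    have c4 : 14 * (2 * (q2 * q6) + 2 * q5) ≤ 14 * ((q3 + 1) * (Bf i).card) := by
      rw [← c2]; exact Nat.mul_le_mul_left _ c1
    have hfin : 28 * (q2 * q6) + 28 * q5 + 28 * q6 ≤ 28 * (q2 * q6) := by
      have e1 : 14 * (2 * (q2 * q6) + 2 * q5) = 28 * (q2 * q6) + 28 * q5 := by ring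
      linarith [c3, c4, stepB]
    linarith [hfin, hq61, hq51]
  have hLfMf : ∀ i : Fin k, i ≠ j → (Lf i).card ≤ (Mf i).card + q3 := by
    intro i hij
    have hsplit : Lf i = Mf i ∪ (Lf i).filter (fun w => ¬ G.Adj u w) := by
      rw [hMf, Finset.filter_union_filter_not_eq]
    have hnc : ((Lf i).filter (fun w => ¬ G.Adj u w)).card ≤ q3 := by
      have hset : {w ∈ L i | ¬ G.Adj u w} = ↑((Lf i).filter (fun w => ¬ G.Adj u w)) := by
        ext w
        simp only [Set.mem_setOf_eq, Finset.coe_filter, Set.mem_setOf_eq]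
        constructor
        · rintro ⟨h1, h2⟩; exact ⟨(hLfmem i w).mpr h1, h2⟩
        · rintro ⟨h1, h2⟩; exact ⟨(hLfmem i w).mp h1, h2⟩
      have := hT.1.2.2.2.2.2 j i (Ne.symm hij) u hu
      rwa [hset, Set.ncard_coe_finset] at this
    calc (Lf i).card = (Mf i ∪ (Lf i).filter (fun w => ¬ G.Adj u w)).card :=
          congrArg Finset.card hsplit
      _ ≤ (Mf i).card + ((Lf i).filter (fun w => ¬ G.Adj u w)).card := Finset.card_union_le _ _
      _ ≤ (Mf i).card + q3 := Nat.add_le_add_left hnc _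
  set K : Finset (Fin k) := Finset.univ.filter (fun i => i ≠ j ∧ q5 ≤ (Gf i).card) with hK
  have hKsub : ∀ i ∈ K, i ≠ j ∧ q5 ≤ (Gf i).card := by
    intro i hi
    rw [hK] at hi
    exact (Finset.mem_filter.mp hi).2
  have hLfcard : ∀ i, (Lf i).card = (L i).ncard := by
    intro i
    rw [hLf, Set.ncard_eq_toFinset_card (L i) (Set.toFinite (L i))]
  have hGfMf : ∀ i, Gf i ⊆ Mf i := by
    intro i; rw [hGf]; exact Finset.sdiff_subset
  have hGfcard_le : ∀ i, (Gf i).card ≤ (L i).ncard := by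
    intro i
    rw [← hLfcard]
    exact Finset.card_le_card (le_trans (hGfMf i) (by rw [hMf]; exact Finset.filter_subset _ _))
  have hMfGfBf : ∀ i, (Mf i).card ≤ (Gf i).card + (Bf i).card := by
    intro i
    have hsub : Bf i ⊆ Mf i := by rw [hBf]; exact Finset.filter_subset _ _
    rw [hGf, Finset.card_sdiff_of_subset hsub]
    omega
  -- the new template
  set σ := {i : Fin k // i ∈ K} with hσ
  set k' := 2 + K.card with hk'
  have hcardeq : Fintype.card (Fin k') = Fintype.card (Bool ⊕ σ) := by
    simp [hk', hσ]
  set e : Fin k' ≃ (Bool ⊕ σ) := Fintype.equivOfCardEq hcardeq with he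
  set part : (Bool ⊕ σ) → Set V :=
    Sum.elim (fun b => cond b (↑A : Set V) ↑B) (fun i => ↑(Gf i.1)) with hpart
  set L' : Fin k' → Set V := fun i => part (e i) with hL'
  have hGfV : ∀ (i : Fin k) (x : V), x ∈ (Gf i : Set V) → x ∈ templateVerts L0 L := by
    intro i x hx
    exact Set.mem_union_right _ (Set.mem_iUnion.mpr ⟨i, hGfL i x (Finset.mem_coe.mp hx)⟩)
  have hdisj : ∀ x y : Bool ⊕ σ, x ≠ y → Disjoint (part x) (part y) := by
    intro x y hxy
    rcases x with b1 | i1 <;> rcases y with b2 | i2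
    · rcases b1 <;> rcases b2
      · exact absurd rfl hxy
      · simpa [hpart] using (Finset.disjoint_coe.mpr hABdisj).symm
      · simpa [hpart] using Finset.disjoint_coe.mpr hABdisj
      · exact absurd rfl hxy
    · refine Set.disjoint_left.mpr fun x hx hy => ?_
      have hyV := hGfV i2.1 x (by simpa [hpart] using hy)
      rcases b1
      · exact hBn x (by simpa [hpart] using hx) hyV
      · exact hAn x (by simpa [hpart] using hx) hyV
    · refine Set.disjoint_left.mpr fun x hx hy => ?_
      have hxV := hGfV i1.1 x (by simpa [hpart] using hx)
      rcases b2
      · exact hBn x (by simpa [hpart] using hy) hxV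
      · exact hAn x (by simpa [hpart] using hy) hxV
    · have hne : i1.1 ≠ i2.1 := by
        intro hEq
        exact hxy (congrArg Sum.inr (Subtype.ext hEq))
      have := hT.1.2.1 hne
      refine Set.disjoint_of_subset ?_ ?_ this
      · intro x hx; exact hGfL i1.1 x (by simpa [hpart] using hx)
      · intro x hx; exact hGfL i2.1 x (by simpa [hpart] using hx)
  have hsize : ∀ x : Bool ⊕ σ, q5 ≤ (part x).ncard ∧ (part x).ncard ≤ 14 * q6 := by
    intro x
    have h14 : q5 ≤ 14 * q6 := le_trans hq56 (by omega)
    rcases x with b | i2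
    · rcases b
      · constructor
        · simp only [hpart, Sum.elim_inl, Bool.cond_false, Set.ncard_coe_finset, hBcard]
          exact h14
        · simp only [hpart, Sum.elim_inl, Bool.cond_false, Set.ncard_coe_finset, hBcard]
          exact le_rfl
      · constructor
        · simp only [hpart, Sum.elim_inl, Bool.cond_true, Set.ncard_coe_finset, hAcard]
          exact h14
        · simp only [hpart, Sum.elim_inl, Bool.cond_true, Set.ncard_coe_finset, hAcard]
          exact le_rfl
    · constructor
      · simp only [hpart, Sum.elim_inr, Set.ncard_coe_finset]
        exact (hKsub i2.1 i2.2).2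
      · simp only [hpart, Sum.elim_inr, Set.ncard_coe_finset]
        exact le_trans (le_trans (Finset.card_le_card (hGfMf i2.1))
          (by rw [← hLfcard]; exact Finset.card_le_card (by rw [hMf]; exact Finset.filter_subset _ _)))
          (hT.1.2.2.2.2.1 i2.1).2
  have hcross : ∀ x y : Bool ⊕ σ, x ≠ y → ∀ v ∈ part x,
      ({w ∈ part y | ¬ G.Adj v w}).ncard ≤ q3 := by
    intro x y hxy v hv
    rcases x with b1 | i1 <;> rcases y with b2 | i2
    · -- A vs B
      rcases b1 <;> rcases b2
      · exact absurd rfl hxy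
      · -- v ∈ B, target A
        have hvB : v ∈ B := by simpa [hpart] using hv
        have hempty : {w ∈ part (Sum.inl true) | ¬ G.Adj v w} = ∅ := by
          ext w
          simp only [hpart, Sum.elim_inl, Bool.cond_true, Set.mem_setOf_eq, Finset.mem_coe,
            Set.mem_empty_iff_false, iff_false, not_and, not_not]
          intro hw
          exact (hABadj w hw v hvB).symm
        rw [hempty, Set.ncard_empty]
        omega
      · -- v ∈ A, target B
        have hvA : v ∈ A := by simpa [hpart] using hv
        have hempty : {w ∈ part (Sum.inl false) | ¬ G.Adj v w} = ∅ := by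
          ext w
          simp only [hpart, Sum.elim_inl, Bool.cond_false, Set.mem_setOf_eq,
            Finset.mem_coe, Set.mem_empty_iff_false, iff_false, not_and, not_not]
          intro hw
          exact hABadj v hvA w hw
        rw [hempty, Set.ncard_empty]
        omega
      · exact absurd rfl hxy
    · -- v ∈ A ∪ B, target Gf i2
      have hij2 : i2.1 ≠ j := (hKsub i2.1 i2.2).1
      have hvAB : v ∈ AB := by
        rw [hAB, Finset.mem_union]
        rcases b1
        · exact Or.inr (by simpa [hpart] using hv)
        · exact Or.inl (by simpa [hpart] using hv)
      have hd : 14 * ({w ∈ L i2.1 | G.Adj u w ∧ ¬ G.Adj v w}).ncard < q2 := by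
        rcases Finset.mem_union.mp hvAB with h | h
        · exact hAd v h i2.1 hij2
        · exact hBd v h i2.1 hij2
      have hsub : {w ∈ part (Sum.inr i2) | ¬ G.Adj v w}
          ⊆ {w ∈ L i2.1 | G.Adj u w ∧ ¬ G.Adj v w} := by
        intro w hw
        simp only [hpart, Sum.elim_inr, Set.mem_setOf_eq, Finset.mem_coe] at hw
        have hwM := (hGfMf i2.1) hw.1
        rw [hMf, Finset.mem_filter] at hwM
        exact ⟨(hLfmem i2.1 w).mp hwM.1, hwM.2, hw.2⟩
      have hle := Set.ncard_le_ncard hsub (Set.toFinite _)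
      omega
    · -- v ∈ Gf i1, target A or B
      have hvG : v ∈ Gf i1.1 := by simpa [hpart] using hv
      have hgood := hGfgood i1.1 v hvG
      have hsub : {w ∈ part (Sum.inl b2) | ¬ G.Adj v w}
          ⊆ ↑(AB.filter (fun x => ¬ G.Adj v x)) := by
        intro w hw
        simp only [Set.mem_setOf_eq] at hw
        simp only [Finset.coe_filter, Set.mem_setOf_eq]
        refine ⟨?_, hw.2⟩
        rw [hAB, Finset.mem_union]
        rcases b2
        · exact Or.inr (by simpa [hpart] using hw.1)
        · exact Or.inl (by simpa [hpart] using hw.1)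
      have hle := Set.ncard_le_ncard hsub (Set.toFinite _)
      rw [Set.ncard_coe_finset] at hle
      omega
    · -- Gf vs Gf
      have hne : i1.1 ≠ i2.1 := by
        intro hEq
        exact hxy (congrArg Sum.inr (Subtype.ext hEq))
      have hvL : v ∈ L i1.1 := hGfL i1.1 v (by simpa [hpart] using hv)
      have htmpl := hT.1.2.2.2.2.2 i1.1 i2.1 hne v hvL
      have hsub : {w ∈ part (Sum.inr i2) | ¬ G.Adj v w} ⊆ {w ∈ L i2.1 | ¬ G.Adj v w} := by
        intro w hw
        simp only [hpart, Sum.elim_inr, Set.mem_setOf_eq, Finset.mem_coe] at hw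
        exact ⟨hGfL i2.1 w hw.1, hw.2⟩
      exact le_trans (Set.ncard_le_ncard hsub (Set.toFinite _)) htmpl
  have hT' : IsTemplate G s (∅ : Set V) L' := by
    refine ⟨fun i => Set.empty_disjoint _, ?_, ?_, ?_, ?_, ?_⟩
    · intro i1 i2 hne
      exact hdisj _ _ (fun h => hne (e.injective h))
    · simp [SimpleGraph.isClique_empty]
    · intro u' hu'
      exact absurd hu' (Set.notMem_empty u')
    · intro i
      exact hsize (e i)
    · intro i1 i2 hne v hv
      exact hcross (e i1) (e i2) (fun h => hne (e.injective h)) v hv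
  -- per-part accounting
  have hsumsplit : ∀ i ∈ Finset.univ.erase j,
      (L i).ncard + q5 ≤ (if i ∈ K then (Gf i).card + q5 else 0) + (q3 + 4 * q5) := by
    intro i hi
    have hij : i ≠ j := (Finset.mem_erase.mp hi).1
    have h1 : (L i).ncard ≤ (Gf i).card + (Bf i).card + q3 := by
      rw [← hLfcard]
      have ha := hLfMf i hij
      have hb := hMfGfBf i
      omega
    have h2 := hBfcard i hij
    by_cases hiK : i ∈ K
    · rw [if_pos hiK]; omega
    · rw [if_neg hiK]
      have h3 : (Gf i).card < q5 := by
        by_contra hcon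
        push_neg at hcon
        exact hiK (by rw [hK]; exact Finset.mem_filter.mpr ⟨Finset.mem_univ i, hij, hcon⟩)
      omega
  have hKerase : (Finset.univ.erase j) ∩ K = K := by
    ext i
    constructor
    · intro h; exact (Finset.mem_inter.mp h).2
    · intro h
      exact Finset.mem_inter.mpr
        ⟨Finset.mem_erase.mpr ⟨(hKsub i h).1, Finset.mem_univ i⟩, h⟩
  have hk1 : 1 ≤ k := j.pos
  have hmain : (∑ i, (L i).ncard) + k * q5 ≤
      (∑ i ∈ K, ((Gf i).card + q5)) + (k - 1) * (q3 + 4 * q5) + ((L j).ncard + q5) := by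
    have hsplit : ∑ i, (L i).ncard = (∑ i ∈ Finset.univ.erase j, (L i).ncard) + (L j).ncard :=
      (Finset.sum_erase_add Finset.univ _ (Finset.mem_univ j)).symm
    have hcarderase : (Finset.univ.erase j).card = k - 1 := by
      rw [Finset.card_erase_of_mem (Finset.mem_univ j), Finset.card_univ, Fintype.card_fin]
    have h4 : ∑ i ∈ Finset.univ.erase j, ((L i).ncard + q5)
        ≤ ∑ i ∈ Finset.univ.erase j,
            ((if i ∈ K then (Gf i).card + q5 else 0) + (q3 + 4 * q5)) :=
      Finset.sum_le_sum hsumsplit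
    rw [Finset.sum_add_distrib, Finset.sum_add_distrib, Finset.sum_const, Finset.sum_const,
      hcarderase, smul_eq_mul, smul_eq_mul, Finset.sum_ite_mem, hKerase] at h4
    have hkq : k * q5 = (k - 1) * q5 + q5 := by
      have h1 : (k - 1) + 1 = k := by omega
      calc k * q5 = ((k - 1) + 1) * q5 := by rw [h1]
        _ = (k - 1) * q5 + q5 := by ring
    rw [hsplit, hkq]
    linarith [h4]
  have hUnew : (⋃ i, L' i) = ↑(A ∪ B ∪ K.biUnion Gf) := by
    ext x
    constructor
    · intro hx
      obtain ⟨i, hi⟩ := Set.mem_iUnion.mp hx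
      simp only [hL'] at hi
      simp only [Finset.coe_union, Set.mem_union, Finset.mem_coe, Finset.mem_biUnion]
      rcases hy : e i with b | i2 <;> rw [hy] at hi
      · rcases b
        · simp only [hpart, Sum.elim_inl, Bool.cond_false, Finset.mem_coe] at hi
          exact Or.inl (Or.inr hi)
        · simp only [hpart, Sum.elim_inl, Bool.cond_true, Finset.mem_coe] at hi
          exact Or.inl (Or.inl hi)
      · simp only [hpart, Sum.elim_inr, Finset.mem_coe] at hi
        exact Or.inr ⟨i2.1, i2.2, hi⟩
    · intro hx
      simp only [Finset.coe_union, Set.mem_union, Finset.mem_coe, Finset.mem_biUnion] at hx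
      rcases hx with (h | h) | ⟨i, hiK, h⟩
      · refine Set.mem_iUnion.mpr ⟨e.symm (Sum.inl true), ?_⟩
        simp only [hL']
        rw [Equiv.apply_symm_apply]
        simpa [hpart] using h
      · refine Set.mem_iUnion.mpr ⟨e.symm (Sum.inl false), ?_⟩
        simp only [hL']
        rw [Equiv.apply_symm_apply]
        simpa [hpart] using h
      · refine Set.mem_iUnion.mpr ⟨e.symm (Sum.inr ⟨i, hiK⟩), ?_⟩
        simp only [hL']
        rw [Equiv.apply_symm_apply]
        simpa [hpart] using h
  have hVnew : templateValue G s (∅ : Set V) L' =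
      28 * q6 + 2 * q5 + (∑ i ∈ K, ((Gf i).card + q5)) := by
    have hdisjABbi : Disjoint (A ∪ B) (K.biUnion Gf) := by
      rw [Finset.disjoint_left]
      intro x hx hx2
      obtain ⟨i, hiK, hxG⟩ := Finset.mem_biUnion.mp hx2
      have hxV : x ∈ templateVerts L0 L :=
        Set.mem_union_right _ (Set.mem_iUnion.mpr ⟨i, hGfL i x hxG⟩)
      rcases Finset.mem_union.mp hx with h | h
      · exact hAn x h hxV
      · exact hBn x h hxV
    have hbi : (K.biUnion Gf).card = ∑ i ∈ K, (Gf i).card := by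
      refine Finset.card_biUnion ?_
      intro i1 _ i2 _ hne
      rw [Function.onFun, ← Finset.disjoint_coe]
      refine Set.disjoint_of_subset ?_ ?_ (hT.1.2.1 hne)
      · exact fun x hx => hGfL i1 x (Finset.mem_coe.mp hx)
      · exact fun x hx => hGfL i2 x (Finset.mem_coe.mp hx)
    have hSsum : ∑ i ∈ K, ((Gf i).card + q5) = (∑ i ∈ K, (Gf i).card) + K.card * q5 := by
      rw [Finset.sum_add_distrib, Finset.sum_const, smul_eq_mul]
    simp only [templateValue]
    rw [hUnew, Set.ncard_coe_finset, Set.ncard_empty, Nat.mul_zero, Nat.add_zero]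
    rw [Finset.card_union_of_disjoint hdisjABbi, Finset.card_union_of_disjoint hABdisj,
      hbi, hAcard, hBcard, hSsum, hk']
    have hgc : G.cliqueNum ^ (s+5) = q5 := by rw [hq5, hωdef]
    rw [hgc]
    ring
  have hVold : templateValue G s L0 L ≤ (∑ i, (L i).ncard) + 7 * q6 + k * q5 := by
    have h1 := tmpl_ncard_iUnion_le k L
    have h2 : L0.ncard ≤ ω := by
      rw [hωdef]
      exact tmpl_L0_card G L0 hT.1.2.2.1
    have h3 : 7 * q5 * L0.ncard ≤ 7 * q6 := by
      calc 7 * q5 * L0.ncard ≤ 7 * q5 * ω := Nat.mul_le_mul_left _ h2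
        _ = 7 * (ω * q5) := by ring
        _ = 7 * q6 := by rw [he56]
    simp only [templateValue]
    have hgc : G.cliqueNum ^ (s+5) = q5 := by rw [hq5, hωdef]
    rw [hgc]
    linarith [h1, h3]
  have hopt := hT.2 k' ∅ L' hT'
  have hLj : (L j).ncard ≤ 14 * q6 := (hT.1.2.2.2.2.1 j).2
  have hkb : (k - 1) * (q3 + 4 * q5) + 5 * q5 ≤ 5 * q6 := by
    have ha : k - 1 ≤ ω - 1 := Nat.sub_le_sub_right hk 1
    have hb : q3 + 4 * q5 ≤ 5 * q5 := by omega
    have hc : (k - 1) * (q3 + 4 * q5) ≤ (ω - 1) * (5 * q5) := Nat.mul_le_mul ha hb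
    have hd : (ω - 1) * (5 * q5) + 5 * q5 = 5 * q6 := by
      have h1 : (ω - 1) + 1 = ω := by omega
      calc (ω - 1) * (5 * q5) + 5 * q5 = ((ω - 1) + 1) * (5 * q5) := by ring
        _ = ω * (5 * q5) := by rw [h1]
        _ = 5 * (ω * q5) := by ring
        _ = 5 * q6 := by rw [he56]
    linarith [hc, hd]
  linarith [hopt, hVnew, hVold, hmain, hkb, hLj, hq61, hq51]

/-- If `G` is `H_s`-free, `𝓛` is an optimal `s`-template of value at least `28 ω^{s+6}`, and
`c` satisfies the Kővári–Sós–Turán-type bound for `H_s`, then the set of dense vertices has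
chromatic number at most `(14 ω^{s+6})^{c+1} ω`. -/
theorem template_dense_chromatic {V : Type*} [Fintype V] (G : SimpleGraph V) (s : ℕ)
    (hs : 1 ≤ s) (hfree : IsInducedFree G (doubleStarGraph s))
    (L0 : Set V) (k : ℕ) (L : Fin k → Set V) (hT : IsOptimalTemplate G s L0 L)
    (hval : 28 * G.cliqueNum ^ (s+6) ≤ templateValue G s L0 L)
    (c : ℕ) (hc : KSTBound s c) :
    (G.induce {v | v ∈ templateNbhd G L0 L ∧ TemplateDense G s L v}).chromaticNumber
      ≤ (((14 * G.cliqueNum ^ (s+6)) ^ (c+1) * G.cliqueNum : ℕ) : ℕ∞) := by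
  classical
  set ω := G.cliqueNum with hωdef
  set t := 14 * ω ^ (s+6) with htdef
  set S : Set V := {v | v ∈ templateNbhd G L0 L ∧ TemplateDense G s L v} with hSdef
  by_cases hSe : IsEmpty ↥S
  · exact le_trans ((SimpleGraph.Colorable.of_isEmpty (G := G.induce S) 0).chromaticNumber_le)
      (by exact_mod_cast Nat.zero_le _)
  rw [not_isEmpty_iff] at hSe
  obtain ⟨v0, hv0⟩ := hSe
  obtain ⟨i0, u0, hu0, hadj0⟩ := hv0.1.2
  have hω2 : 2 ≤ ω := tmpl_adj_cliqueNum G hadj0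
  have hω1 : 1 ≤ ω := by omega
  have ht1 : 1 ≤ t := by
    rw [htdef]
    have : 1 ≤ ω ^ (s+6) := Nat.one_le_pow _ _ (by omega)
    omega
  have htc1 : 1 ≤ t ^ c := Nat.one_le_pow _ _ (by omega)
  have hk : k ≤ ω := tmpl_k_le_omega G s L0 L hT.1 hω2
  -- choose witnesses
  have hwit : ∀ v : ↥S, ∃ (j : Fin k) (u : V), u ∈ L j ∧ ∀ i : Fin k, i ≠ j →
      14 * ({w ∈ L i | G.Adj u w ∧ ¬ G.Adj (v : V) w}).ncard < ω ^ (s+2) := by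
    intro v
    obtain ⟨j, u, hu, hcond⟩ := v.2.2
    exact ⟨j, u, hu, hcond⟩
  choose jf uf hufmem hufcond using hwit
  -- classes
  set Cu : V → Set V := fun u => {x | ∃ hx : x ∈ S, uf ⟨x, hx⟩ = u} with hCu
  -- the part index of members of a class is determined
  have hjdet : ∀ (u : V) (j : Fin k), u ∈ L j → ∀ (x : V) (hx : x ∈ S),
      uf ⟨x, hx⟩ = u → jf ⟨x, hx⟩ = j := by
    intro u j hj x hx hux
    by_contra hne
    have hdisj := hT.1.2.1 hne
    have hmem : u ∈ L (jf ⟨x, hx⟩) := hux ▸ hufmem ⟨x, hx⟩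
    exact Set.disjoint_left.mp hdisj hmem hj
  -- each class graph is colorable with t^c colors
  have hclass : ∀ u : V, (G.induce (Cu u)).Colorable (t ^ c) := by
    intro u
    refine tmpl_colorable_of_KST (G.induce (Cu u)) s c t ?_ hc ?_
    · exact tmpl_free_of_embed G _ _ (Subtype.val) Subtype.val_injective
        (fun _ _ => Iff.rfl) hfree
    · intro A' B' hA' hB' hdisj' hadj'
      -- get the part index
      have hA'ne : A'.Nonempty := Finset.card_pos.mp (by omega)
      obtain ⟨a0, ha0⟩ := hA'ne
      have hmem0 : ∃ hx : (a0 : V) ∈ S, uf ⟨(a0 : V), hx⟩ = u := a0.2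
      obtain ⟨ha0S, ha0u⟩ := hmem0
      set j : Fin k := jf ⟨(a0 : V), ha0S⟩ with hjdef2
      have huLj : u ∈ L j := ha0u ▸ hufmem ⟨(a0 : V), ha0S⟩
      set A : Finset V := A'.image Subtype.val with hAdef
      set B : Finset V := B'.image Subtype.val with hBdef
      have hvalinj : Function.Injective (Subtype.val : ↥(Cu u) → V) :=
        Subtype.val_injective
      have hmemS : ∀ x ∈ A ∪ B, x ∈ Cu u := by
        intro x hx
        rcases Finset.mem_union.mp hx with h | h
        · obtain ⟨x', _, hfx⟩ := Finset.mem_image.mp h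
          rw [← hfx]
          exact x'.2
        · obtain ⟨x', _, hfx⟩ := Finset.mem_image.mp h
          rw [← hfx]
          exact x'.2
      have hmemS' : ∀ x ∈ A ∪ B, ∃ hx : x ∈ S, uf ⟨x, hx⟩ = u := fun x hx => hmemS x hx
      have hnotV : ∀ x ∈ A ∪ B, x ∉ templateVerts L0 L := by
        intro x hx
        obtain ⟨hxS, _⟩ := hmemS' x hx
        exact hxS.1.1
      have hdense : ∀ x ∈ A ∪ B, ∀ i : Fin k, i ≠ j →
          14 * ({w ∈ L i | G.Adj u w ∧ ¬ G.Adj x w}).ncard < ω ^ (s+2) := by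
        intro x hx i hi
        obtain ⟨hxS, hxu⟩ := hmemS' x hx
        have hjx : jf ⟨x, hxS⟩ = j := hjdet u j huLj x hxS hxu
        have := hufcond ⟨x, hxS⟩ i (by rw [hjx]; exact hi)
        rwa [hxu] at this
      refine tmpl_no_ktt G s L0 L hT (by rw [← hωdef]; exact hω2) j u huLj A B
        (fun v hv => hnotV v (Finset.mem_union_left _ hv))
        (fun v hv => hnotV v (Finset.mem_union_right _ hv))
        (fun v hv => by
          have := hdense v (Finset.mem_union_left _ hv)
          intro i hi
          have h2 := this i hi
          rwa [← hωdef])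
        (fun v hv => by
          have := hdense v (Finset.mem_union_right _ hv)
          intro i hi
          have h2 := this i hi
          rwa [← hωdef])
        ?_ ?_ ?_ ?_
      · rw [hAdef, Finset.card_image_of_injective _ hvalinj, hA', htdef, hωdef]
      · rw [hBdef, Finset.card_image_of_injective _ hvalinj, hB', htdef, hωdef]
      · rw [hAdef, hBdef]
        exact (Finset.disjoint_image hvalinj).mpr hdisj'
      · intro a ha b hb
        rw [hAdef] at ha
        rw [hBdef] at hb
        obtain ⟨a', ha', hfa⟩ := Finset.mem_image.mp ha
        obtain ⟨b', hb', hfb⟩ := Finset.mem_image.mp hb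
        rw [← hfa, ← hfb]
        exact hadj' a' ha' b' hb'
  -- extract coloring functions
  have hcol : ∀ u : V, ∃ g : V → Fin (t ^ c),
      ∀ x y (hx : x ∈ Cu u) (hy : y ∈ Cu u), G.Adj x y → g x ≠ g y := by
    intro u
    obtain ⟨C⟩ := hclass u
    refine ⟨fun x => if hx : x ∈ Cu u then C ⟨x, hx⟩ else ⟨0, by omega⟩, ?_⟩
    intro x y hx hy hadj
    dsimp only
    rw [dif_pos hx, dif_pos hy]
    exact C.valid (by exact hadj)
  choose g hg using hcol
  -- the union set
  set U : Set V := ⋃ i, L i with hUdef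
  haveI : Fintype ↥U := Fintype.ofFinite _
  have hUcard : Fintype.card ↥U ≤ ω * t := by
    have h1 : U.ncard ≤ ∑ i, (L i).ncard := tmpl_ncard_iUnion_le k L
    have h2 : ∑ i, (L i).ncard ≤ k * t := by
      calc ∑ i, (L i).ncard ≤ ∑ _i : Fin k, t := by
            refine Finset.sum_le_sum fun i _ => ?_
            have := (hT.1.2.2.2.2.1 i).2
            rw [htdef, hωdef]
            exact this
        _ = k * t := by simp [Finset.sum_const, Finset.card_univ, mul_comm]
    have h3 : Fintype.card ↥U = U.ncard := by
      rw [← Nat.card_coe_set_eq, Nat.card_eq_fintype_card]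
    rw [h3]
    calc U.ncard ≤ k * t := le_trans h1 h2
      _ ≤ ω * t := Nat.mul_le_mul_right _ hk
  -- assemble the coloring
  have hcolorable : (G.induce S).Colorable (t ^ (c+1) * ω) := by
    have hufU : ∀ v : ↥S, uf v ∈ U := fun v => Set.mem_iUnion.mpr ⟨jf v, hufmem v⟩
    set F : ↥S → ↥U × Fin (t ^ c) :=
      fun v => (⟨uf v, hufU v⟩, g (uf v) (v : V)) with hF
    have hvalid : ∀ {v w : ↥S}, (G.induce S).Adj v w → F v ≠ F w := by
      intro v w hadj hEq
      have hadj2 : G.Adj (v : V) (w : V) := hadj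
      have h1 : uf v = uf w := congrArg (fun p => (p.1 : V)) hEq
      have h2 : g (uf v) (v : V) = g (uf v) (w : V) := by
        have := congrArg Prod.snd hEq
        simpa [hF, ← h1] using this
      have hvC : (v : V) ∈ Cu (uf v) := ⟨v.2, rfl⟩
      have hwC : (w : V) ∈ Cu (uf v) := ⟨w.2, h1.symm⟩
      exact hg (uf v) (v : V) (w : V) hvC hwC hadj2 h2
    have C : (G.induce S).Coloring (↥U × Fin (t ^ c)) := SimpleGraph.Coloring.mk F hvalid
    have h1 : (G.induce S).Colorable (Fintype.card (↥U × Fin (t ^ c))) := C.colorable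
    refine h1.mono ?_
    rw [Fintype.card_prod, Fintype.card_fin]
    calc Fintype.card ↥U * t ^ c ≤ (ω * t) * t ^ c := Nat.mul_le_mul_right _ hUcard
      _ = t ^ (c+1) * ω := by rw [pow_succ]; ring
  have hfinal := hcolorable.chromaticNumber_le
  refine le_trans hfinal ?_
  have : t ^ (c+1) * ω = (14 * G.cliqueNum ^ (s+6)) ^ (c+1) * G.cliqueNum := by
    rw [htdef, hωdef]
  rw [this]
end
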